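/- arXiv:1104.3293 — 8 statements merged into one kernel-verified Lean document; each statement's English description precedes it below -/
import Mathlib

section
/- There exist natural numbers p, q > 1, an enumeration (m_i, n_i) of all pairs of naturals greater than 1 such that p^{m_0} q^{n_0} < p^{m_1} q^{n_1} < ..., and positive rationals a_k defined by a_{4i+1} = p^{-m_i} q^{-n_i}, a_{4i+2} = m_i p^{-m_i} q^{-n_i}, a_{4i+3} = m_i n_i p^{-m_i} q^{-n_i}, a_{4i+4} = n_i p^{-m_i} q^{-n_i}, such that ∑_{k=1}^∞ a_k converges to a rational number a < 1. -/
open Nat in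
private def Pv : ℕ → Prop := fun v => ∃ M N : ℕ, 1 < M ∧ 1 < N ∧ v = 2 ^ M * 5 ^ N

private lemma Pv_infinite : (setOf Pv).Infinite := by
  apply Set.infinite_of_injective_forall_mem (f := fun k : ℕ => 2 ^ (k + 2) * 5 ^ 2)
  · intro i j h
    simp only [Nat.mul_left_cancel_iff] at h
    have h' : 2 ^ (i + 2) = 2 ^ (j + 2) := by
      have h25 : (0:ℕ) < 5 ^ 2 := by norm_num
      exact Nat.eq_of_mul_eq_mul_right h25 h
    have := Nat.pow_right_injective (le_refl 2) h'
    omega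
  · intro k
    exact ⟨k + 2, 2, by omega, by omega, rfl⟩

private lemma fac2 (M N : ℕ) : (2 ^ M * 5 ^ N).factorization 2 = M := by
  rw [Nat.factorization_mul (by positivity) (by positivity),
    Nat.Prime.factorization_pow Nat.prime_two,
    Nat.Prime.factorization_pow (by norm_num : Nat.Prime 5)]
  simp

private lemma fac5 (M N : ℕ) : (2 ^ M * 5 ^ N).factorization 5 = N := by
  rw [Nat.factorization_mul (by positivity) (by positivity),
    Nat.Prime.factorization_pow Nat.prime_two,
    Nat.Prime.factorization_pow (by norm_num : Nat.Prime 5)]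
  simp

private noncomputable def mseq (i : ℕ) : ℕ := (Nat.nth Pv i).factorization 2
private noncomputable def nseq (i : ℕ) : ℕ := (Nat.nth Pv i).factorization 5

private lemma mn_key (i : ℕ) :
    1 < mseq i ∧ 1 < nseq i ∧ 2 ^ mseq i * 5 ^ nseq i = Nat.nth Pv i := by
  obtain ⟨M, N, hM, hN, hv⟩ := Nat.nth_mem_of_infinite Pv_infinite i
  have hm : mseq i = M := by rw [mseq, hv, fac2]
  have hn : nseq i = N := by rw [nseq, hv, fac5]
  exact ⟨hm ▸ hM, hn ▸ hN, by rw [hm, hn, hv]⟩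

private lemma mn_exists (M N : ℕ) (hM : 1 < M) (hN : 1 < N) :
    ∃ i, mseq i = M ∧ nseq i = N := by
  have hmem : Pv (2 ^ M * 5 ^ N) := ⟨M, N, hM, hN, rfl⟩
  obtain ⟨i, hi⟩ := Nat.subset_range_nth (p := Pv) hmem
  have hi' : Nat.nth Pv i = 2 ^ M * 5 ^ N := hi
  exact ⟨i, by rw [mseq, hi', fac2], by rw [nseq, hi', fac5]⟩

private lemma mn_inj {i j : ℕ} (hm : mseq i = mseq j) (hn : nseq i = nseq j) : i = j := by
  apply Nat.nth_injective Pv_infinite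
  rw [← (mn_key i).2.2, ← (mn_key j).2.2, hm, hn]

theorem stmt6 :
    ∃ (p q : ℕ), 1 < p ∧ 1 < q ∧
    ∃ (m n : ℕ → ℕ),
      (∀ i, 1 < m i ∧ 1 < n i) ∧
      (∀ M N : ℕ, 1 < M → 1 < N → ∃! i, m i = M ∧ n i = N) ∧
      StrictMono (fun i => p ^ m i * q ^ n i) ∧
      ∃ (a : ℕ → ℚ),
        (∀ i, a (4 * i) = ((p : ℚ) ^ m i * (q : ℚ) ^ n i)⁻¹ ∧
              a (4 * i + 1) = (m i : ℚ) * ((p : ℚ) ^ m i * (q : ℚ) ^ n i)⁻¹ ∧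
              a (4 * i + 2) = (m i : ℚ) * (n i : ℚ) * ((p : ℚ) ^ m i * (q : ℚ) ^ n i)⁻¹ ∧
              a (4 * i + 3) = (n i : ℚ) * ((p : ℚ) ^ m i * (q : ℚ) ^ n i)⁻¹) ∧
        (∀ k, 0 < a k) ∧
        ∃ aa : ℚ, 0 < aa ∧ aa < 1 ∧ HasSum (fun k => ((a k : ℝ))) (aa : ℝ) := by
  classical
  refine ⟨2, 5, by norm_num, by norm_num, mseq, nseq, fun i => ⟨(mn_key i).1, (mn_key i).2.1⟩,
    ?_, ?_, ?_⟩
  · intro M N hM hN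
    obtain ⟨i, hi⟩ := mn_exists M N hM hN
    exact ⟨i, hi, fun j hj => mn_inj (by rw [hj.1, hi.1]) (by rw [hj.2, hi.2])⟩
  · have : (fun i => 2 ^ mseq i * 5 ^ nseq i) = Nat.nth Pv := by
      funext i; exact (mn_key i).2.2
    rw [this]
    exact Nat.nth_strictMono Pv_infinite
  · -- the sequence a
    set a : ℕ → ℚ := fun k =>
      (if k % 4 = 0 then 1 else if k % 4 = 1 then (mseq (k / 4) : ℚ)
        else if k % 4 = 2 then (mseq (k / 4) : ℚ) * (nseq (k / 4) : ℚ)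
        else (nseq (k / 4) : ℚ)) *
      ((2 : ℚ) ^ mseq (k / 4) * (5 : ℚ) ^ nseq (k / 4))⁻¹ with ha
    have hspec : ∀ i, a (4 * i) = ((2 : ℚ) ^ mseq i * (5 : ℚ) ^ nseq i)⁻¹ ∧
        a (4 * i + 1) = (mseq i : ℚ) * ((2 : ℚ) ^ mseq i * (5 : ℚ) ^ nseq i)⁻¹ ∧
        a (4 * i + 2) = (mseq i : ℚ) * (nseq i : ℚ) * ((2 : ℚ) ^ mseq i * (5 : ℚ) ^ nseq i)⁻¹ ∧
        a (4 * i + 3) = (nseq i : ℚ) * ((2 : ℚ) ^ mseq i * (5 : ℚ) ^ nseq i)⁻¹ := by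
      intro i
      have h0 : (4 * i) % 4 = 0 ∧ (4 * i) / 4 = i := by omega
      have h1 : (4 * i + 1) % 4 = 1 ∧ (4 * i + 1) / 4 = i := by omega
      have h2 : (4 * i + 2) % 4 = 2 ∧ (4 * i + 2) / 4 = i := by omega
      have h3 : (4 * i + 3) % 4 = 3 ∧ (4 * i + 3) / 4 = i := by omega
      refine ⟨?_, ?_, ?_, ?_⟩ <;>
        simp [ha, h0.1, h0.2, h1.1, h1.2, h2.1, h2.2, h3.1, h3.2]
    have hpos : ∀ k, 0 < a k := by
      intro k
      have hm := (mn_key (k / 4)).1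
      have hn := (mn_key (k / 4)).2.1
      have hm' : (0 : ℚ) < mseq (k / 4) := by
        exact_mod_cast (by omega : 0 < mseq (k / 4))
      have hn' : (0 : ℚ) < nseq (k / 4) := by
        exact_mod_cast (by omega : 0 < nseq (k / 4))
      rw [ha]
      dsimp only
      split_ifs <;> positivity
    refine ⟨a, hspec, hpos, 13 / 40, by norm_num, by norm_num, ?_⟩
    -- Step A: the grouped sum
    have f2 : HasSum (fun M : ℕ => ((M : ℝ) + 3) * (1 / 2 : ℝ) ^ (M + 2)) 2 := by
      have h1 : HasSum (fun M : ℕ => (M : ℝ) * (1 / 2 : ℝ) ^ M)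
          ((1 / 2 : ℝ) / (1 - 1 / 2) ^ 2) :=
        hasSum_coe_mul_geometric_of_norm_lt_one (by norm_num)
      have h2 : HasSum (fun M : ℕ => (1 / 2 : ℝ) ^ M) (1 - 1 / 2 : ℝ)⁻¹ :=
        hasSum_geometric_of_lt_one (by norm_num) (by norm_num)
      have := (h1.mul_left (1 / 4)).add ((h2.mul_left (3 / 4)))
      convert this using 1
      · rfl
      · funext M; ring
      · norm_num
    have f5 : HasSum (fun N : ℕ => ((N : ℝ) + 3) * (1 / 5 : ℝ) ^ (N + 2)) (13 / 80) := by
      have h1 : HasSum (fun N : ℕ => (N : ℝ) * (1 / 5 : ℝ) ^ N)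
          ((1 / 5 : ℝ) / (1 - 1 / 5) ^ 2) :=
        hasSum_coe_mul_geometric_of_norm_lt_one (by norm_num)
      have h2 : HasSum (fun N : ℕ => (1 / 5 : ℝ) ^ N) (1 - 1 / 5 : ℝ)⁻¹ :=
        hasSum_geometric_of_lt_one (by norm_num) (by norm_num)
      have := (h1.mul_left (1 / 25)).add ((h2.mul_left (3 / 25)))
      convert this using 1
      · rfl
      · funext N; ring
      · norm_num
    have hprod : HasSum (fun x : ℕ × ℕ =>
        ((x.1 : ℝ) + 3) * (1 / 2 : ℝ) ^ (x.1 + 2) * (((x.2 : ℝ) + 3) * (1 / 5 : ℝ) ^ (x.2 + 2)))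
        (13 / 40) := by
      have hs := Summable.mul_of_nonneg f2.summable f5.summable
        (fun M => by positivity) (fun N => by positivity)
      have := f2.mul f5 hs
      convert this using 1
      norm_num
      rfl
      norm_num
    -- transfer via bijection
    have hbij : Function.Bijective (fun i => (mseq i - 2, nseq i - 2) : ℕ → ℕ × ℕ) := by
      constructor
      · intro i j h
        have h1 : mseq i - 2 = mseq j - 2 := congrArg Prod.fst h
        have h2 : nseq i - 2 = nseq j - 2 := congrArg Prod.snd h
        have := (mn_key i).1; have := (mn_key j).1
        have := (mn_key i).2.1; have := (mn_key j).2.1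
        exact mn_inj (by omega) (by omega)
      · rintro ⟨M, N⟩
        obtain ⟨i, hi1, hi2⟩ := mn_exists (M + 2) (N + 2) (by omega) (by omega)
        exact ⟨i, by simp [hi1, hi2]⟩
    have hg : HasSum (fun i => ((mseq i : ℝ) + 1) * ((nseq i : ℝ) + 1) *
        ((2 : ℝ) ^ mseq i * (5 : ℝ) ^ nseq i)⁻¹) (13 / 40) := by
      have h := (Equiv.ofBijective _ hbij).hasSum_iff.mpr hprod
      have heq : ((fun x : ℕ × ℕ =>
          ((x.1 : ℝ) + 3) * (1 / 2 : ℝ) ^ (x.1 + 2) *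
            (((x.2 : ℝ) + 3) * (1 / 5 : ℝ) ^ (x.2 + 2))) ∘
          (Equiv.ofBijective _ hbij)) =
          fun i => ((mseq i : ℝ) + 1) * ((nseq i : ℝ) + 1) *
            ((2 : ℝ) ^ mseq i * (5 : ℝ) ^ nseq i)⁻¹ := by
        funext i
        have hm := (mn_key i).1
        have hn := (mn_key i).2.1
        simp only [Function.comp_apply, Equiv.ofBijective_apply]
        have e1 : mseq i - 2 + 2 = mseq i := by omega
        have e2 : nseq i - 2 + 2 = nseq i := by omega
        rw [e1, e2, Nat.cast_sub (by omega), Nat.cast_sub (by omega)]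
        have h2 : (0 : ℝ) < 2 ^ mseq i := by positivity
        have h5 : (0 : ℝ) < 5 ^ nseq i := by positivity
        rw [one_div, one_div, inv_pow, inv_pow]
        push_cast
        field_simp
        ring
      rw [heq] at h
      exact h
    -- Step B: from the grouped sum to the full sum
    set F : ℕ × Fin 4 → ℝ := fun x => ((a (x.1 * 4 + (x.2 : ℕ)) : ℝ)) with hFdef
    have hfib : ∀ i, ∑ j : Fin 4, F (i, j) =
        ((mseq i : ℝ) + 1) * ((nseq i : ℝ) + 1) *
          ((2 : ℝ) ^ mseq i * (5 : ℝ) ^ nseq i)⁻¹ := by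
      intro i
      have hcomm : i * 4 = 4 * i := mul_comm i 4
      obtain ⟨s0, s1, s2, s3⟩ := hspec i
      rw [Fin.sum_univ_four]
      have c0 : ((0 : Fin 4) : ℕ) = 0 := rfl
      have c1 : ((1 : Fin 4) : ℕ) = 1 := rfl
      have c2 : ((2 : Fin 4) : ℕ) = 2 := rfl
      have c3 : ((3 : Fin 4) : ℕ) = 3 := rfl
      simp only [hFdef, c0, c1, c2, c3, hcomm, add_zero]
      rw [s0, s1, s2, s3]
      push_cast
      ring
    have hFnonneg : 0 ≤ F := fun x => by
      simp only [hFdef, Pi.zero_apply]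
      exact_mod_cast (hpos _).le
    have hFsummable : Summable F := by
      rw [summable_prod_of_nonneg hFnonneg]
      constructor
      · intro x
        exact (hasSum_fintype fun j : Fin 4 => F (x, j)).summable
      · apply Summable.congr hg.summable
        intro i
        rw [tsum_fintype, hfib]
    have hFib' : ∀ i, HasSum (fun j : Fin 4 => F (i, j))
        (((mseq i : ℝ) + 1) * ((nseq i : ℝ) + 1) *
          ((2 : ℝ) ^ mseq i * (5 : ℝ) ^ nseq i)⁻¹) := by
      intro i
      have := hasSum_fintype fun j : Fin 4 => F (i, j)
      rwa [hfib i] at this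
    have hgF : HasSum F (13 / 40) := by
      have h1 := hFsummable.hasSum
      have h2 := HasSum.prod_fiberwise h1 hFib'
      have h3 := hg.unique h2
      rwa [← h3] at h1
    have hfinal : HasSum (fun k => ((a k : ℝ))) (13 / 40) := by
      have := ((Nat.divModEquiv 4).symm.hasSum_iff (f := fun k => ((a k : ℝ)))
        (a := (13 / 40 : ℝ))).mp ?_
      · exact this
      · have heq : ((fun k => ((a k : ℝ))) ∘ (Nat.divModEquiv 4).symm) = F := by
          funext x
          simp [hFdef, Nat.divModEquiv]
        rw [heq]
        exact hgF
    have hcast : ((13 / 40 : ℚ) : ℝ) = 13 / 40 := by norm_num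
    rw [hcast]
    exact hfinal
end

section
/- Given a sequence (a_k)_{k≥1} of positive rationals as in the main construction (with parameters p, q and enumeration (m_i, n_i)), there exists a strictly decreasing sequence (b_k)_{k≥1} of positive rationals with 1 > b_1 > b_2 > ... such that ∑_{k=1}^∞ b_k a_k converges to a positive rational number b. -/
theorem stmt7 (p q : ℕ) (hp : 1 < p) (hq : 1 < q) (hpq : Nat.Coprime p q)
    (m n : ℕ → ℕ)
    (hmn : ∀ i, 1 < m i ∧ 1 < n i)
    (henum : ∀ M N : ℕ, 1 < M → 1 < N → ∃! i, m i = M ∧ n i = N)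
    (hmono : StrictMono (fun i => p ^ m i * q ^ n i))
    (a : ℕ → ℚ)
    (hadef : ∀ i, a (4 * i) = ((p : ℚ) ^ m i * (q : ℚ) ^ n i)⁻¹ ∧
              a (4 * i + 1) = (m i : ℚ) * ((p : ℚ) ^ m i * (q : ℚ) ^ n i)⁻¹ ∧
              a (4 * i + 2) = (m i : ℚ) * (n i : ℚ) * ((p : ℚ) ^ m i * (q : ℚ) ^ n i)⁻¹ ∧
              a (4 * i + 3) = (n i : ℚ) * ((p : ℚ) ^ m i * (q : ℚ) ^ n i)⁻¹)
    (aa : ℚ) (haa : aa < 1) (hasum : HasSum (fun k => ((a k : ℝ))) (aa : ℝ)) :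
    ∃ b : ℕ → ℚ,
      (∀ k, 0 < b k) ∧ b 0 < 1 ∧ StrictAnti b ∧
      ∃ bb : ℚ, 0 < bb ∧ HasSum (fun k => ((b k * a k : ℚ) : ℝ)) (bb : ℝ) := by
  -- positivity of a
  have hp' : (0:ℚ) < (p:ℚ) := by exact_mod_cast lt_trans Nat.zero_lt_one hp
  have hq' : (0:ℚ) < (q:ℚ) := by exact_mod_cast lt_trans Nat.zero_lt_one hq
  have apos : ∀ k, 0 < a k := by
    intro k
    set i := k / 4 with hi
    have hm' : (0:ℚ) < (m i : ℚ) := by exact_mod_cast lt_trans Nat.zero_lt_one (hmn i).1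
    have hn' : (0:ℚ) < (n i : ℚ) := by exact_mod_cast lt_trans Nat.zero_lt_one (hmn i).2
    obtain ⟨h0, h1, h2, h3⟩ := hadef i
    have hk : k = 4*i ∨ k = 4*i+1 ∨ k = 4*i+2 ∨ k = 4*i+3 := by omega
    rcases hk with h | h | h | h <;> rw [h]
    · rw [h0]; positivity
    · rw [h1]; positivity
    · rw [h2]; positivity
    · rw [h3]; positivity
  -- tails
  set T : ℕ → ℚ := fun k => aa - ∑ j ∈ Finset.range k, a j with hT
  have hTcast : ∀ k, ((T k : ℚ) : ℝ) = (aa:ℝ) - ∑ j ∈ Finset.range k, ((a j : ℚ):ℝ) := by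
    intro k; simp [hT]
  have hTsucc : ∀ k, T (k+1) = T k - a k := by
    intro k; simp [hT, Finset.sum_range_succ]; ring
  have hTpos : ∀ k, 0 < T k := by
    intro k
    have htail : HasSum (fun j => ((a (j + k) : ℚ) : ℝ))
        ((aa:ℝ) - ∑ j ∈ Finset.range k, ((a j : ℚ):ℝ)) := by
      refine (hasSum_nat_add_iff (f := fun j => ((a j : ℚ):ℝ)) k).mpr ?_
      convert hasum using 1
      · rfl
      ring
    have hle : ((a (0 + k) : ℚ):ℝ) ≤ (aa:ℝ) - ∑ j ∈ Finset.range k, ((a j : ℚ):ℝ) :=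
      le_hasSum htail 0 (fun j _ => by exact_mod_cast (apos (j + k)).le)
    have h0 : (0:ℝ) < ((a (0+k) : ℚ):ℝ) := by exact_mod_cast apos (0+k)
    have : (0:ℝ) < ((T k : ℚ):ℝ) := by rw [hTcast]; linarith
    exact_mod_cast this
  have haapos : 0 < aa := by
    have := hTpos 0
    simpa [hT] using this
  have hTlt : ∀ k, T (k+1) < T k := by
    intro k; rw [hTsucc]; linarith [apos k]
  -- define b
    -- b k = (T k + T (k+1)) / (2*aa)
  refine ⟨fun k => (T k + T (k+1)) / (2*aa), ?_, ?_, ?_, aa/2, by linarith, ?_⟩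
  · intro k
    have := hTpos k; have := hTpos (k+1)
    positivity
  · have h1 : T 0 = aa := by simp [hT]
    have := hTlt 0
    rw [div_lt_one (by linarith)]
    linarith
  · apply strictAnti_nat_of_succ_lt
    intro k
    have h1 := hTlt k; have h2 := hTlt (k+1)
    have haa2 : (0:ℚ) < 2*aa := by linarith
    exact div_lt_div_of_pos_right (by linarith) haa2
  · -- telescoping sum
    have hterm : ∀ k, (T k + T (k+1)) / (2*aa) * a k
        = T k ^ 2 / (2*aa) - T (k+1) ^ 2 / (2*aa) := by
      intro k
      have haa0 : (2*aa) ≠ 0 := by positivity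
      rw [hTsucc k]
      field_simp
      ring
    have hsum : ∀ N, ∑ k ∈ Finset.range N, (((T k + T (k+1)) / (2*aa) * a k : ℚ) : ℝ)
        = ((T 0 ^ 2 / (2*aa) : ℚ):ℝ) - ((T N ^ 2 / (2*aa) : ℚ):ℝ) := by
      intro N
      have : ∀ k, (((T k + T (k+1)) / (2*aa) * a k : ℚ) : ℝ)
          = ((T k ^2 / (2*aa) : ℚ):ℝ) - ((T (k+1) ^2 / (2*aa) : ℚ):ℝ) := by
        intro k; rw [hterm k]; push_cast; ring
      simp only [this]
      exact Finset.sum_range_sub' (fun k => ((T k ^2 / (2*aa) : ℚ):ℝ)) N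
    have hTtend : Filter.Tendsto (fun N => ((T N : ℚ):ℝ)) Filter.atTop (nhds 0) := by
      have h1 := hasum.tendsto_sum_nat
      have h2 : Filter.Tendsto (fun N => (aa:ℝ) - ∑ j ∈ Finset.range N, ((a j : ℚ):ℝ))
          Filter.atTop (nhds ((aa:ℝ) - (aa:ℝ))) := Filter.Tendsto.sub tendsto_const_nhds h1
      simpa only [hTcast, sub_self] using h2
    have hnonneg : ∀ k, (0:ℝ) ≤ (((T k + T (k+1)) / (2*aa) * a k : ℚ) : ℝ) := by
      intro k
      have h1 := hTpos k; have h2 := hTpos (k+1); have h3 := apos k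
      have : (0:ℚ) ≤ (T k + T (k+1)) / (2*aa) * a k := by positivity
      exact_mod_cast this
    rw [hasSum_iff_tendsto_nat_of_nonneg hnonneg]
    simp only [hsum]
    have hT0 : T 0 = aa := by simp [hT]
    have hg : Filter.Tendsto (fun N => ((T N ^ 2 / (2*aa) : ℚ):ℝ)) Filter.atTop (nhds 0) := by
      have : ∀ N, ((T N ^ 2 / (2*aa) : ℚ):ℝ) = ((T N : ℚ):ℝ)^2 / ((2*aa : ℚ):ℝ) := by
        intro N; push_cast; ring
      simp only [this]
      have := (hTtend.pow 2).div_const (((2*aa : ℚ):ℝ))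
      simpa using this
    have := Filter.Tendsto.sub (tendsto_const_nhds
        (x := ((T 0 ^ 2 / (2*aa) : ℚ):ℝ))) hg
    convert this using 2
    rw [hT0]
    push_cast
    field_simp
    ring
end

section
/- In the normed space 𝕁 = K² with the norm whose unit disc is the set D of the construction, for all k ≥ 1 the vector v_{k+1} - v_k lies in the closed north-east quadrant and ‖v_{k+1} - v_k‖_𝕁 = ‖v_{k+1} - v_k‖₁ = a_k. -/
open Pointwise

/-- The cross product test: positive when `w` is on the left of the directed line from `p` to `r`. -/
def cross {K : Type*} [Field K] [LinearOrder K] [IsStrictOrderedRing K] (p r w : K × K) : K :=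
  (r.1 - p.1) * (w.2 - p.2) - (r.2 - p.2) * (w.1 - p.1)

/-- The closed half-plane bounded by the line through `p` and `r` that contains the origin
(assuming the origin is not on that line). -/
def halfPlane {K : Type*} [Field K] [LinearOrder K] [IsStrictOrderedRing K] (p r : K × K) : Set (K × K) :=
  {w | 0 ≤ cross p r w * cross p r (0, 0)}

/-- The unit disc `D` of the construction, determined by the vertices `v k`. -/
def discD {K : Type*} [Field K] [LinearOrder K] [IsStrictOrderedRing K] (v : ℕ → K × K) : Set (K × K) :=
  (⋂ k, halfPlane (v k) (v (k + 1))) ∩ {w : K × K | w.2 ≤ 1} ∩ {w : K × K | w.1 + w.2 ≤ 1} ∩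
    (⋂ k, -halfPlane (v k) (v (k + 1))) ∩ (-{w : K × K | w.2 ≤ 1}) ∩
    (-{w : K × K | w.1 + w.2 ≤ 1})

/-- Partial sums of `(1 - b i) * a i`. -/
def pS (a b : ℕ → ℚ) (m : ℕ) : ℚ := ∑ i ∈ Finset.range m, (1 - b i) * a i

/-- Partial sums of `b i * a i`. -/
def pT (a b : ℕ → ℚ) (m : ℕ) : ℚ := ∑ i ∈ Finset.range m, b i * a i

/-- Partial sums of `a i`. -/
def pU (a : ℕ → ℚ) (m : ℕ) : ℚ := ∑ i ∈ Finset.range m, a i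

lemma aux_tail (a b : ℕ → ℚ) (aa bb : ℚ)
    (ha : ∀ k, 0 < a k) (hbanti : StrictAnti b)
    (hasum : HasSum (fun k => ((a k : ℝ))) (aa : ℝ))
    (hbsum : HasSum (fun k => ((b k * a k : ℚ) : ℝ)) (bb : ℝ)) (m : ℕ) :
    bb - pT a b m ≤ b m * (aa - pU a m) := by
  have hta : HasSum (fun n => ((a (n + m) : ℝ)))
      ((aa : ℝ) - ∑ i ∈ Finset.range m, ((a i : ℝ))) :=
    (hasSum_nat_add_iff (f := fun n => ((a n : ℝ))) m).mpr (by simpa using hasum)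
  have htb : HasSum (fun n => ((b (n + m) * a (n + m) : ℚ) : ℝ))
      ((bb : ℝ) - ∑ i ∈ Finset.range m, ((b i * a i : ℚ) : ℝ)) :=
    (hasSum_nat_add_iff (f := fun n => ((b n * a n : ℚ) : ℝ)) m).mpr
      (by simpa using hbsum)
  have hle := hasSum_le (g := fun n => ((b m : ℝ)) * ((a (n + m) : ℝ)))
    (fun n => by
      have h1 : b (n + m) ≤ b m := hbanti.antitone (Nat.le_add_left m n)
      have h2 : (0:ℚ) ≤ a (n + m) := (ha _).le
      have h3 : b (n + m) * a (n + m) ≤ b m * a (n + m) :=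
        mul_le_mul_of_nonneg_right h1 h2
      push_cast
      exact_mod_cast h3)
    htb (hta.mul_left ((b m : ℝ)))
  have h2 : ((bb - pT a b m : ℚ) : ℝ) ≤ ((b m * (aa - pU a m) : ℚ) : ℝ) := by
    rw [pT, pU]; push_cast; push_cast at hle; linarith
  exact_mod_cast h2

lemma aux_Ule (a : ℕ → ℚ) (aa : ℚ) (ha : ∀ k, 0 < a k)
    (hasum : HasSum (fun k => ((a k : ℝ))) (aa : ℝ)) (m : ℕ) :
    pU a m ≤ aa := by
  have h := sum_le_hasSum (Finset.range m)
    (fun i _ => by exact_mod_cast (ha i).le) hasum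
  have h2 : ((pU a m : ℚ) : ℝ) ≤ ((aa : ℚ) : ℝ) := by
    rw [pU]; push_cast; simpa using h
  exact_mod_cast h2

lemma aux_Tle (a b : ℕ → ℚ) (bb : ℚ) (ha : ∀ k, 0 < a k) (hb0 : ∀ k, 0 < b k)
    (hbsum : HasSum (fun k => ((b k * a k : ℚ) : ℝ)) (bb : ℝ)) (m : ℕ) :
    pT a b m ≤ bb := by
  have h := sum_le_hasSum (Finset.range m)
    (fun i _ => by exact_mod_cast (mul_nonneg (hb0 i).le (ha i).le)) hbsum
  have h2 : ((pT a b m : ℚ) : ℝ) ≤ ((bb : ℚ) : ℝ) := by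
    rw [pT]; push_cast; simpa using h
  exact_mod_cast h2

lemma aux_key1 (c ak bk S T U aa bb : ℚ)
    (hc0 : 0 < c) (hc1 : c < 1) (hbk0 : 0 < bk) (hbk1 : bk < 1) (hak : 0 < ak)
    (htail : bb - T ≤ c * (aa - U)) (hSU : S ≤ U) (hUaa : U ≤ aa) (haa : aa < 1)
    (hS0 : 0 ≤ S) :
    (1 - c) * ak * (bk - (1 - bb + T)) - c * ak * ((1 - bk) - (-1 + S)) ≤ 0 := by
  have h1 : (1 - c) * (bb - T) ≤ (1 - c) * (c * (aa - U)) :=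
    mul_le_mul_of_nonneg_left htail (by linarith)
  have haux : aa - U ≤ 1 - S := by linarith
  have haux2 : (0:ℚ) ≤ aa - U := by linarith
  have h2 : (1 - c) * (c * (aa - U)) ≤ 1 * (c * (1 - S)) := by
    nlinarith [mul_nonneg hc0.le haux2]
  have hbr : (1 - c) * (bk - (1 - bb + T)) - c * ((1 - bk) - (-1 + S)) ≤ 0 := by
    nlinarith
  nlinarith [mul_le_mul_of_nonneg_left hbr hak.le]

lemma aux_key2 (c ak bk S T U aa bb : ℚ)
    (hc0 : 0 < c) (hc1 : c < 1) (hbk0 : 0 < bk) (hbk1 : bk < 1) (hak : 0 < ak)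
    (htail : bb - T ≤ c * (aa - U)) (hSU : S ≤ U) (hUaa : U ≤ aa) (haa : aa < 1)
    (hS0 : 0 ≤ S) (hR6 : c * S ≤ (1 - c) * U) :
    (1 - c) * ak * (-bk - (1 - bb + T)) - c * ak * (-(1 - bk) - (-1 + S)) ≤ 0 := by
  have h1 : (1 - c) * (bb - T) ≤ (1 - c) * (c * (aa - U)) :=
    mul_le_mul_of_nonneg_left htail (by linarith)
  have haux2 : (0:ℚ) ≤ aa - U := by linarith
  have h3 : (1 - c) * (c * (aa - U)) ≤ (1 - c) * (aa - U) := by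
    nlinarith [mul_nonneg (mul_nonneg (show (0:ℚ) ≤ 1 - c by linarith)
      (show (0:ℚ) ≤ 1 - c by linarith)) haux2]
  have hbr : (1 - c) * (-bk - (1 - bb + T)) - c * (-(1 - bk) - (-1 + S)) ≤ 0 := by
    nlinarith
  nlinarith [mul_le_mul_of_nonneg_left hbr hak.le]

lemma aux_key0 (c ak S T bb : ℚ)
    (hc0 : 0 < c) (hc1 : c < 1) (hak : 0 < ak) (hT0 : 0 ≤ T) (hbb1 : bb < 1)
    (hS1 : S ≤ 1) :
    (1 - c) * ak * (0 - (1 - bb + T)) - c * ak * (0 - (-1 + S)) ≤ 0 := by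
  have hbr : (1 - c) * (0 - (1 - bb + T)) - c * (0 - (-1 + S)) ≤ 0 := by
    nlinarith
  nlinarith [mul_le_mul_of_nonneg_left hbr hak.le]

set_option maxHeartbeats 1000000 in
theorem stmt12 {K : Type*} [Field K] [LinearOrder K] [IsStrictOrderedRing K]
    (a b : ℕ → ℚ) (aa bb : ℚ)
    (ha : ∀ k, 0 < a k)
    (hb0 : ∀ k, 0 < b k) (hb1 : b 0 < 1) (hbanti : StrictAnti b)
    (hasum : HasSum (fun k => ((a k : ℝ))) (aa : ℝ)) (haa : aa < 1)
    (hbsum : HasSum (fun k => ((b k * a k : ℚ) : ℝ)) (bb : ℝ))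
    (hab : aa - bb - 1 < 0)
    (v : ℕ → K × K)
    (hv0 : v 0 = (-1, 0))
    (hv1 : v 1 = (-1, 1 - (bb : K)))
    (hvrec : ∀ k, v (k + 2) = v (k + 1) + ((((1 - b k) * a k : ℚ) : K), ((b k * a k : ℚ) : K)))
    (N : K × K → K)
    (hN : ∀ u : K × K, 0 ≤ N u ∧ u ∈ N u • discD v ∧
      ∀ s : K, 0 ≤ s → s < N u → u ∉ s • discD v) :
    ∀ k : ℕ,
      0 ≤ (v (k + 2) - v (k + 1)).1 ∧ 0 ≤ (v (k + 2) - v (k + 1)).2 ∧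
      N (v (k + 2) - v (k + 1))
        = |(v (k + 2) - v (k + 1)).1| + |(v (k + 2) - v (k + 1)).2| ∧
      N (v (k + 2) - v (k + 1)) = ((a k : ℚ) : K) := by
  classical
  have hb1' : ∀ m, b m < 1 := fun m =>
    lt_of_le_of_lt (hbanti.antitone (Nat.zero_le m)) hb1
  have hS0 : ∀ m, 0 ≤ pS a b m := fun m =>
    Finset.sum_nonneg fun i _ => by nlinarith [ha i, hb1' i]
  have hT0 : ∀ m, 0 ≤ pT a b m := fun m =>
    Finset.sum_nonneg fun i _ => mul_nonneg (hb0 i).le (ha i).le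
  have hSU : ∀ m, pS a b m ≤ pU a m := fun m =>
    Finset.sum_le_sum fun i _ => by nlinarith [ha i, hb0 i]
  have hUle : ∀ m, pU a m ≤ aa := aux_Ule a aa ha hasum
  have hTle : ∀ m, pT a b m ≤ bb := aux_Tle a b bb ha hb0 hbsum
  have htail : ∀ m, bb - pT a b m ≤ b m * (aa - pU a m) :=
    aux_tail a b aa bb ha hbanti hasum hbsum
  have haa0 : (0:ℚ) ≤ aa := by simpa [pU] using hUle 0
  have hbb0 : (0:ℚ) ≤ bb := by simpa [pT] using hTle 0
  have hbb1 : bb < 1 := by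
    have h := htail 0
    simp [pT, pU] at h
    nlinarith [hb0 0, hb1, haa]
  have hR6 : ∀ m, b m * pS a b m ≤ (1 - b m) * pU a m := by
    intro m
    rw [pS, pU]
    simp only [Finset.mul_sum]
    apply Finset.sum_le_sum
    intro i hi
    have him : b m ≤ b i := hbanti.antitone (Finset.mem_range.mp hi).le
    have h1 : b m * (1 - b i) ≤ 1 - b m := by
      nlinarith [sq_nonneg (1 - b m), mul_le_mul_of_nonneg_left him (hb0 m).le]
    nlinarith [mul_le_mul_of_nonneg_right h1 (ha i).le]
  -- closed form for the vertices
  have hvcf : ∀ m, v (m + 1)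
      = (-1 + ((pS a b m : ℚ) : K), 1 - (bb : K) + ((pT a b m : ℚ) : K)) := by
    intro m
    induction m with
    | zero => simp [hv1, pS, pT]
    | succ n ih =>
      rw [hvrec n, ih]
      have hs : pS a b (n + 1) = pS a b n + (1 - b n) * a n :=
        Finset.sum_range_succ _ _
      have ht : pT a b (n + 1) = pT a b n + b n * a n :=
        Finset.sum_range_succ _ _
      simp only [Prod.mk_add_mk, Prod.mk.injEq, hs, ht]
      constructor <;> (push_cast; ring)
  intro k
  set w : K × K := (((1 - b k : ℚ) : K), ((b k : ℚ) : K)) with hwdef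
  have hwk0 : (0:ℚ) < b k := hb0 k
  have hwk1 : b k < 1 := hb1' k
  -- cross products in K reduce to rational expressions
  have hcrossw : ∀ j, cross (v j) (v (j + 1)) w ≤ 0 := by
    intro j
    match j with
    | 0 =>
      have hq : -(1 - bb) * ((1 - b k) - -1) ≤ (0:ℚ) := by nlinarith [hbb1]
      have he : cross (v 0) (v 1) w = ((-(1 - bb) * ((1 - b k) - -1) : ℚ) : K) := by
        rw [hv0, hv1, hwdef]; simp only [cross]; push_cast; ring
      rw [he]; exact_mod_cast hq
    | (m + 1) =>
      have he : cross (v (m + 1)) (v (m + 2)) w =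
          (((1 - b m) * a m * (b k - (1 - bb + pT a b m)) -
            b m * a m * ((1 - b k) - (-1 + pS a b m)) : ℚ) : K) := by
        rw [hvrec m, hvcf m, hwdef]; simp only [cross, Prod.mk_add_mk]; push_cast; ring
      rw [he]
      have hq := aux_key1 (b m) (a m) (b k) (pS a b m) (pT a b m) (pU a m) aa bb
        (hb0 m) (hb1' m) (hb0 k) (hb1' k) (ha m) (htail m) (hSU m) (hUle m) haa (hS0 m)
      exact_mod_cast hq
  have hcrossw' : ∀ j, cross (v j) (v (j + 1)) (-w) ≤ 0 := by
    intro j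
    match j with
    | 0 =>
      have hq : -(1 - bb) * (-(1 - b k) - -1) ≤ (0:ℚ) := by nlinarith [hbb1, hb0 k]
      have he : cross (v 0) (v 1) (-w) = ((-(1 - bb) * (-(1 - b k) - -1) : ℚ) : K) := by
        rw [hv0, hv1, hwdef]
        simp only [cross, Prod.fst_neg, Prod.snd_neg]; push_cast; ring
      rw [he]; exact_mod_cast hq
    | (m + 1) =>
      have he : cross (v (m + 1)) (v (m + 2)) (-w) =
          (((1 - b m) * a m * (-(b k) - (1 - bb + pT a b m)) -
            b m * a m * (-(1 - b k) - (-1 + pS a b m)) : ℚ) : K) := by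
        rw [hvrec m, hvcf m, hwdef]
        simp only [cross, Prod.mk_add_mk, Prod.fst_neg, Prod.snd_neg]; push_cast; ring
      rw [he]
      have hq := aux_key2 (b m) (a m) (b k) (pS a b m) (pT a b m) (pU a m) aa bb
        (hb0 m) (hb1' m) (hb0 k) (hb1' k) (ha m) (htail m) (hSU m) (hUle m) haa
        (hS0 m) (hR6 m)
      exact_mod_cast hq
  have hcross0 : ∀ j, cross (v j) (v (j + 1)) (0, 0) ≤ 0 := by
    intro j
    match j with
    | 0 =>
      have hq : -(1 - bb) * ((0:ℚ) - -1) ≤ (0:ℚ) := by nlinarith [hbb1]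
      have he : cross (v 0) (v 1) ((0:K), (0:K))
          = ((-(1 - bb) * ((0:ℚ) - -1) : ℚ) : K) := by
        rw [hv0, hv1]; simp only [cross]; push_cast; ring
      rw [he]; exact_mod_cast hq
    | (m + 1) =>
      have he : cross (v (m + 1)) (v (m + 2)) ((0:K), (0:K)) =
          (((1 - b m) * a m * (0 - (1 - bb + pT a b m)) -
            b m * a m * (0 - (-1 + pS a b m)) : ℚ) : K) := by
        rw [hvrec m, hvcf m]; simp only [cross, Prod.mk_add_mk]; push_cast; ring
      rw [he]
      have hS1 : pS a b m ≤ 1 := le_trans (hSU m) (le_of_lt (lt_of_le_of_lt (hUle m) haa))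
      have hq := aux_key0 (b m) (a m) (pS a b m) (pT a b m) bb
        (hb0 m) (hb1' m) (ha m) (hT0 m) hbb1 hS1
      exact_mod_cast hq
  -- membership of w in the disc
  have hwD : w ∈ discD v := by
    refine ⟨⟨⟨⟨⟨?_, ?_⟩, ?_⟩, ?_⟩, ?_⟩, ?_⟩
    · exact Set.mem_iInter.mpr fun j =>
        mul_nonneg_iff.mpr (Or.inr ⟨hcrossw j, hcross0 j⟩)
    · show ((b k : ℚ) : K) ≤ 1
      exact_mod_cast hwk1.le
    · show ((1 - b k : ℚ) : K) + ((b k : ℚ) : K) ≤ 1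
      have he : ((1 - b k : ℚ) : K) + ((b k : ℚ) : K) = 1 := by push_cast; ring
      rw [he]
    · refine Set.mem_iInter.mpr fun j => ?_
      rw [Set.mem_neg]
      exact mul_nonneg_iff.mpr (Or.inr ⟨hcrossw' j, hcross0 j⟩)
    · rw [Set.mem_neg]
      show -((b k : ℚ) : K) ≤ 1
      have h0 : (0:K) ≤ ((b k : ℚ) : K) := by exact_mod_cast hwk0.le
      linarith
    · rw [Set.mem_neg]
      show -((1 - b k : ℚ) : K) + -((b k : ℚ) : K) ≤ 1
      have he : ((1 - b k : ℚ) : K) + ((b k : ℚ) : K) = 1 := by push_cast; ring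
      linarith
  -- the difference vector
  have hdiff : v (k + 2) - v (k + 1)
      = ((((1 - b k) * a k : ℚ) : K), ((b k * a k : ℚ) : K)) := by
    rw [hvrec k, add_sub_cancel_left]
  have hu1 : (v (k + 2) - v (k + 1)).1 = (((1 - b k) * a k : ℚ) : K) := by rw [hdiff]
  have hu2 : (v (k + 2) - v (k + 1)).2 = ((b k * a k : ℚ) : K) := by rw [hdiff]
  have hu1nn : 0 ≤ (v (k + 2) - v (k + 1)).1 := by
    rw [hu1]
    have h : (0:ℚ) ≤ (1 - b k) * a k := by nlinarith [ha k, hb1' k]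
    exact_mod_cast h
  have hu2nn : 0 ≤ (v (k + 2) - v (k + 1)).2 := by
    rw [hu2]
    have h : (0:ℚ) ≤ b k * a k := by nlinarith [ha k, hb0 k]
    exact_mod_cast h
  have husum : (v (k + 2) - v (k + 1)).1 + (v (k + 2) - v (k + 1)).2 = ((a k : ℚ) : K) := by
    rw [hu1, hu2]; push_cast; ring
  have humem : v (k + 2) - v (k + 1) ∈ ((a k : ℚ) : K) • discD v := by
    rw [Set.mem_smul_set]
    refine ⟨w, hwD, ?_⟩
    rw [hwdef, hdiff, Prod.smul_mk, smul_eq_mul, smul_eq_mul, Prod.mk.injEq]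
    constructor <;> (push_cast; ring)
  have hunotmem : ∀ s : K, 0 ≤ s → s < ((a k : ℚ) : K) →
      v (k + 2) - v (k + 1) ∉ s • discD v := by
    intro s hs0 hs hmem
    rw [Set.mem_smul_set] at hmem
    obtain ⟨d, hd, hdu⟩ := hmem
    have hd12 : d.1 + d.2 ≤ 1 := hd.1.1.1.2
    have h1 : (v (k + 2) - v (k + 1)).1 + (v (k + 2) - v (k + 1)).2
        = s * (d.1 + d.2) := by
      rw [← hdu]; simp only [Prod.smul_fst, Prod.smul_snd, smul_eq_mul]; ring
    have h2 : s * (d.1 + d.2) ≤ s * 1 := mul_le_mul_of_nonneg_left hd12 hs0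
    rw [husum] at h1
    nlinarith
  obtain ⟨hN0, hNmem, hNmin⟩ := hN (v (k + 2) - v (k + 1))
  have hak0 : (0:K) ≤ ((a k : ℚ) : K) := by exact_mod_cast (ha k).le
  have hle : N (v (k + 2) - v (k + 1)) ≤ ((a k : ℚ) : K) := by
    by_contra h
    push_neg at h
    exact hNmin _ hak0 h humem
  have hge : ((a k : ℚ) : K) ≤ N (v (k + 2) - v (k + 1)) := by
    by_contra h
    push_neg at h
    exact hunotmem _ hN0 h hNmem
  have hNu : N (v (k + 2) - v (k + 1)) = ((a k : ℚ) : K) := le_antisymm hle hge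
  refine ⟨hu1nn, hu2nn, ?_, hNu⟩
  rw [abs_of_nonneg hu1nn, abs_of_nonneg hu2nn, hNu, husum]
end

section
/- In the normed space 𝕁 of the construction, ‖e₂ - e₁‖_𝕁 > 1, i.e. the vector (−1, 1) does not lie in the unit disc D. -/
open Pointwise

theorem stmt13 {K : Type*} [Field K] [LinearOrder K] [IsStrictOrderedRing K]
    (a b : ℕ → ℚ) (aa bb : ℚ)
    (ha : ∀ k, 0 < a k)
    (hb0 : ∀ k, 0 < b k) (hb1 : b 0 < 1) (hbanti : StrictAnti b)
    (hasum : HasSum (fun k => ((a k : ℝ))) (aa : ℝ)) (haa : aa < 1)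
    (hbsum : HasSum (fun k => ((b k * a k : ℚ) : ℝ)) (bb : ℝ))
    (hab : aa - bb - 1 < 0)
    (v : ℕ → K × K)
    (hv0 : v 0 = (-1, 0))
    (hv1 : v 1 = (-1, 1 - (bb : K)))
    (hvrec : ∀ k, v (k + 2) = v (k + 1) + ((((1 - b k) * a k : ℚ) : K), ((b k * a k : ℚ) : K)))
    (N : K × K → K)
    (hN : ∀ u : K × K, 0 ≤ N u ∧ u ∈ N u • discD v ∧
      ∀ s : K, 0 ≤ s → s < N u → u ∉ s • discD v) :
    ((-1, 1) : K × K) ∉ discD v ∧ 1 < N (((0, 1) : K × K) - ((1, 0) : K × K)) := by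
  -- rational facts
  have hbbpos : (0 : ℚ) < bb := by
    have h1 : ((b 0 * a 0 : ℚ) : ℝ) ≤ (bb : ℝ) := by
      refine le_hasSum hbsum 0 ?_
      intro i _
      have := (hb0 i).le
      have := (ha i).le
      positivity
    have h2 : (0 : ℚ) < b 0 * a 0 := mul_pos (hb0 0) (ha 0)
    have := h2.trans_le (by exact_mod_cast h1)
    exact this
  have hbblt1 : bb < 1 := by
    have hle : (bb : ℝ) ≤ (aa : ℝ) := by
      refine hasSum_le ?_ hbsum hasum
      intro i
      have h1 : b i * a i ≤ a i := by
        have hbi : b i ≤ b 0 := hbanti.antitone (Nat.zero_le i)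
        nlinarith [ha i, hb0 i]
      exact_mod_cast h1
    have : (bb : ℝ) < 1 := lt_of_le_of_lt hle (by exact_mod_cast haa)
    exact_mod_cast this
  -- facts in K
  have hbbK0 : (0 : K) < (bb : K) := by exact_mod_cast hbbpos
  have hbbK1 : (bb : K) < 1 := by exact_mod_cast hbblt1
  have ha0K : (0 : K) < ((a 0 : ℚ) : K) := by exact_mod_cast ha 0
  have hb0K : (0 : K) < ((b 0 : ℚ) : K) := by exact_mod_cast hb0 0
  have hb1K : ((b 0 : ℚ) : K) < 1 := by exact_mod_cast hb1
  -- key lemma: (-t, t) with t ≥ 1 is not in the half-plane of edge (v 1, v 2)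
  have key : ∀ t : K, 1 ≤ t → ((-t, t) : K × K) ∉ halfPlane (v 1) (v 2) := by
    intro t ht hmem
    have hv2 : v 2 = v 1 + ((((1 - b 0) * a 0 : ℚ) : K), ((b 0 * a 0 : ℚ) : K)) := hvrec 0
    rw [halfPlane] at hmem
    simp only [Set.mem_setOf_eq, cross, hv2, hv1, Prod.fst_add, Prod.snd_add, Prod.mk_add_mk] at hmem
    push_cast at hmem
    set A := ((a 0 : ℚ) : K)
    set B := ((b 0 : ℚ) : K)
    set C := ((bb : ℚ) : K)
    have hcw : (0:K) < ((1 - B) * A) * (t - (1 - C)) - (B * A) * (-t - (-1)) := by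
      nlinarith [mul_pos ha0K hbbK0, mul_pos (mul_pos ha0K (sub_pos.mpr hbbK1)) (sub_pos.mpr hb1K)]
    have hc0 : ((1 - B) * A) * ((0:K) - (1 - C)) - (B * A) * ((0:K) - (-1)) < 0 := by
      nlinarith [mul_pos (mul_pos ha0K (sub_pos.mpr hb1K)) (sub_pos.mpr hbbK1), mul_pos ha0K hb0K]
    nlinarith [mul_neg_of_pos_of_neg hcw hc0]
  have hnot : ∀ t : K, 1 ≤ t → ((-t, t) : K × K) ∉ discD v := by
    intro t ht hmem
    have h1 : ((-t, t) : K × K) ∈ ⋂ k, halfPlane (v k) (v (k + 1)) :=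
      hmem.1.1.1.1.1
    exact key t ht (Set.mem_iInter.mp h1 1)
  refine ⟨hnot 1 le_rfl, ?_⟩
  set u : K × K := ((0, 1) : K × K) - ((1, 0) : K × K) with hu
  have hueq : u = ((-1 : K), (1 : K)) := by simp [hu, Prod.ext_iff]
  obtain ⟨hN0, hNmem, -⟩ := hN u
  by_contra hcon
  push_neg at hcon
  obtain ⟨w, hw, hcw⟩ := Set.mem_smul_set.mp hNmem
  have hc2 : N u * w.2 = 1 := by
    have := congrArg Prod.snd hcw
    simpa [hueq, Prod.smul_def, smul_eq_mul] using this
  have hc1 : N u * w.1 = -1 := by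
    have := congrArg Prod.fst hcw
    simpa [hueq, Prod.smul_def, smul_eq_mul] using this
  have hcne : N u ≠ 0 := by
    intro h
    rw [h, zero_mul] at hc2
    exact zero_ne_one hc2
  have hcpos : 0 < N u := lt_of_le_of_ne hN0 (Ne.symm hcne)
  have hw2 : w.2 = (N u)⁻¹ := by field_simp at hc2 ⊢; linarith
  have hw1 : w.1 = -(N u)⁻¹ := by
    field_simp at hc1 ⊢
    linarith
  have ht : (1 : K) ≤ (N u)⁻¹ := (one_le_inv₀ hcpos).mpr hcon
  have : ((-(N u)⁻¹, (N u)⁻¹) : K × K) ∈ discD v := by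
    have : w = ((-(N u)⁻¹, (N u)⁻¹) : K × K) := Prod.ext hw1 hw2
    rwa [this] at hw
  exact hnot ((N u)⁻¹) ht this
end

section
/- The set D of the construction is convex, symmetric about the origin, and meets every line through the origin of K² in a segment [-x, x] with x ≠ 0; hence D is the unit disc of a norm on K². -/
set_option linter.unusedSectionVars false

open Pointwise

namespace S14

variable (a b : ℕ → ℚ) (aa bb : ℚ)

def Sa (k : ℕ) : ℚ := ∑ j ∈ Finset.range k, a j
def Sb (k : ℕ) : ℚ := ∑ j ∈ Finset.range k, b j * a j
def xq : ℕ → ℚ := fun m => if m = 0 then -1 else -1 + Sa a (m-1) - Sb a b (m-1)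
def yq : ℕ → ℚ := fun m => if m = 0 then 0 else 1 - bb + Sb a b (m-1)
def βq : ℕ → ℚ := fun k => if k = 0 then 1 else b (k-1)
def γq : ℕ → ℚ := fun k => if k = 0 then 1 - bb else a (k-1)
def Lq (k m : ℕ) : ℚ := (1 - βq b k) * yq a b bb m - βq b k * xq a b m
def Mq (k : ℕ) : ℚ := Lq a b bb k k

section Hyp
variable (ha : ∀ k, 0 < a k)
    (hb0 : ∀ k, 0 < b k) (hb1 : b 0 < 1) (hbanti : StrictAnti b)
    (hasum : HasSum (fun k => ((a k : ℝ))) (aa : ℝ)) (haa : aa < 1)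
    (hbsum : HasSum (fun k => ((b k * a k : ℚ) : ℝ)) (bb : ℝ))

include hb1 hbanti in
lemma hb1' : ∀ k, b k < 1 := fun k => lt_of_le_of_lt (hbanti.antitone (Nat.zero_le k)) hb1

lemma Sa_cast (k : ℕ) : ((Sa a k : ℚ) : ℝ) = ∑ i ∈ Finset.range k, ((a i : ℚ) : ℝ) := by
  simp [Sa]

lemma Sb_cast (k : ℕ) : ((Sb a b k : ℚ) : ℝ) = ∑ i ∈ Finset.range k, ((b i * a i : ℚ) : ℝ) := by
  simp [Sb]

include ha hasum in
lemma P1 : ∀ k, Sa a k ≤ aa := by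
  intro k
  have h := sum_le_hasSum (Finset.range k)
    (fun i _ => le_of_lt (by exact_mod_cast ha i)) hasum
  rw [← Sa_cast] at h
  exact_mod_cast h

include ha hb0 hbsum in
lemma P2 : ∀ k, Sb a b k ≤ bb := by
  intro k
  have h := sum_le_hasSum (Finset.range k)
    (fun i _ => le_of_lt (by exact_mod_cast mul_pos (hb0 i) (ha i))) hbsum
  rw [← Sb_cast] at h
  exact_mod_cast h

include hasum in
lemma tailA (j : ℕ) : HasSum (fun n => ((a (n + j) : ℚ) : ℝ)) ((aa - Sa a j : ℚ) : ℝ) := by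
  rw [hasSum_nat_add_iff (f := fun k => ((a k : ℚ) : ℝ)) j, ← Sa_cast]
  convert hasum using 2
  · rfl
  push_cast; ring

include hbsum in
lemma tailB (j : ℕ) : HasSum (fun n => ((b (n + j) * a (n + j) : ℚ) : ℝ))
    ((bb - Sb a b j : ℚ) : ℝ) := by
  rw [hasSum_nat_add_iff (f := fun k => ((b k * a k : ℚ) : ℝ)) j, ← Sb_cast]
  convert hbsum using 2
  · rfl
  push_cast; ring

include ha hbanti hasum hbsum in
lemma taildiff (j : ℕ) : HasSum (fun n => (((b j - b (n + j)) * a (n + j) : ℚ) : ℝ))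
    ((b j * (aa - Sa a j) - (bb - Sb a b j) : ℚ) : ℝ) := by
  have h := ((tailA a aa hasum j).mul_left ((b j : ℚ) : ℝ)).sub (tailB a b bb hbsum j)
  convert h using 2 with n
  · rfl
  · push_cast; ring
  · push_cast; ring

include ha hbanti hasum hbsum in
lemma P3 : ∀ j, bb - Sb a b j ≤ b j * (aa - Sa a j) := by
  intro j
  have h := hasSum_le (g := fun n => (((b j - b (n + j)) * a (n + j) : ℚ) : ℝ))
    (fun n => by
      have : (0:ℚ) ≤ (b j - b (n + j)) * a (n + j) :=
        mul_nonneg (by have := hbanti.antitone (Nat.le_add_left j n); linarith) (ha _).le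
      show (0:ℝ) ≤ (((b j - b (n + j)) * a (n + j) : ℚ) : ℝ)
      exact_mod_cast this)
    hasSum_zero (taildiff a b aa bb ha hbanti hasum hbsum j)
  have : (0:ℚ) ≤ b j * (aa - Sa a j) - (bb - Sb a b j) := by exact_mod_cast h
  linarith

include ha hbanti hasum hbsum in
lemma P4 : ∀ j, bb - Sb a b j + (b j - b (j+1)) * a (j+1) ≤ b j * (aa - Sa a j) := by
  intro j
  have h := le_hasSum (taildiff a b aa bb ha hbanti hasum hbsum j) 1
    (fun n _ => by
      have : (0:ℚ) ≤ (b j - b (n + j)) * a (n + j) :=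
        mul_nonneg (by have := hbanti.antitone (Nat.le_add_left j n); linarith) (ha _).le
      show (0:ℝ) ≤ (((b j - b (n + j)) * a (n + j) : ℚ) : ℝ)
      exact_mod_cast this)
  have h2 : ((b j - b (1 + j)) * a (1 + j) : ℚ) ≤ b j * (aa - Sa a j) - (bb - Sb a b j) := by
    exact_mod_cast h
  rw [add_comm 1 j] at h2
  linarith

include ha hasum in
lemma SaTendsto : Filter.Tendsto (fun n => ((Sa a n : ℚ) : ℝ)) Filter.atTop (nhds (aa : ℝ)) := by
  have h := hasum.tendsto_sum_nat
  convert h using 2 with n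
  exact Sa_cast a n

include hbsum in
lemma SbTendsto : Filter.Tendsto (fun n => ((Sb a b n : ℚ) : ℝ)) Filter.atTop (nhds (bb : ℝ)) := by
  have h := hbsum.tendsto_sum_nat
  convert h using 2 with n
  exact Sb_cast a b n

include ha hasum hbsum in
lemma P5 : ∀ c W : ℚ, W < c * (aa - bb - 1) →
    ∃ m, 1 ≤ m ∧ yq a b bb m * W ≤ c * xq a b m := by
  intro c W hW
  have hx : Filter.Tendsto (fun n => ((c * xq a b (n+1) : ℚ) : ℝ)) Filter.atTop
      (nhds ((c * (aa - bb - 1) : ℚ) : ℝ)) := by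
    have : Filter.Tendsto (fun n => ((c : ℚ):ℝ) * (-1 + ((Sa a n : ℚ):ℝ) - ((Sb a b n : ℚ):ℝ)))
        Filter.atTop (nhds (((c:ℚ):ℝ) * (-1 + (aa:ℝ) - (bb:ℝ)))) :=
      (((tendsto_const_nhds.add (SaTendsto a aa ha hasum)).sub
        (SbTendsto a b bb hbsum)).const_mul _)
    convert this using 2 with n
    · push_cast [xq]; ring
    · push_cast; ring
  have hy : Filter.Tendsto (fun n => ((yq a b bb (n+1) * W : ℚ) : ℝ)) Filter.atTop
      (nhds ((1 * W : ℚ) : ℝ)) := by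
    have : Filter.Tendsto (fun n => (1 - ((bb:ℚ):ℝ) + ((Sb a b n : ℚ):ℝ)) * ((W:ℚ):ℝ))
        Filter.atTop (nhds ((1 - ((bb:ℚ):ℝ) + (bb:ℝ)) * ((W:ℚ):ℝ))) :=
      ((tendsto_const_nhds.add (SbTendsto a b bb hbsum)).mul tendsto_const_nhds)
    convert this using 2 with n
    · push_cast [yq]; ring
    · push_cast; ring
  have hlt : ((1 * W : ℚ):ℝ) < ((c * (aa - bb - 1) : ℚ):ℝ) := by
    have : (1 * W : ℚ) < c * (aa - bb - 1) := by linarith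
    exact_mod_cast this
  have hev := hy.eventually_lt hx hlt
  obtain ⟨n, hn⟩ := hev.exists
  exact ⟨n + 1, by omega, by exact_mod_cast hn.le⟩

omit hasum haa hbsum

lemma Sa_succ (k : ℕ) : Sa a (k+1) = Sa a k + a k := Finset.sum_range_succ _ _
lemma Sb_succ (k : ℕ) : Sb a b (k+1) = Sb a b k + b k * a k := Finset.sum_range_succ _ _

include ha in
lemma Sa_nonneg (k : ℕ) : 0 ≤ Sa a k :=
  Finset.sum_nonneg (fun i _ => (ha i).le)

include ha hb0 in
lemma Sb_nonneg (k : ℕ) : 0 ≤ Sb a b k :=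
  Finset.sum_nonneg (fun i _ => (mul_pos (hb0 i) (ha i)).le)

include ha hb1 hbanti in
lemma SaSb_nonneg (k : ℕ) : 0 ≤ Sa a k - Sb a b k := by
  rw [Sa, Sb, ← Finset.sum_sub_distrib]
  refine Finset.sum_nonneg (fun i _ => ?_)
  have h1 := hb1' b hb1 hbanti i
  nlinarith [ha i]

include ha hasum in
lemma aa0 : 0 < aa := lt_of_lt_of_le (ha 0) (by
  have := P1 a aa ha hasum 1
  simpa [Sa] using this)

include ha hb0 hbsum in
lemma bb0 : 0 < bb := lt_of_lt_of_le (mul_pos (hb0 0) (ha 0)) (by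
  have := P2 a b bb ha hb0 hbsum 1
  simpa [Sb] using this)

include ha hb0 hb1 hbanti hasum hbsum in
lemma bblt : bb < aa := by
  have h := P3 a b aa bb ha hbanti hasum hbsum 0
  have h0 := aa0 a aa ha hasum
  have h1 : Sa a 0 = 0 := rfl
  have h2 : Sb a b 0 = 0 := rfl
  rw [h1, h2] at h
  nlinarith [hb0 0, hb1]

include ha hb0 hb1 hbanti hasum haa hbsum in
lemma bb1 : bb < 1 := lt_trans (bblt a b aa bb ha hb0 hb1 hbanti hasum hbsum) haa

include ha hasum in
lemma P1s (k : ℕ) : Sa a k < aa := by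
  have := P1 a aa ha hasum (k+1)
  rw [Sa_succ] at this
  nlinarith [ha k]

include ha hb0 hbsum in
lemma P2s (k : ℕ) : Sb a b k < bb := by
  have := P2 a b bb ha hb0 hbsum (k+1)
  rw [Sb_succ] at this
  nlinarith [ha k, hb0 k]

include ha hb1 hbanti hasum hbsum in
lemma Pabs (k : ℕ) : Sa a k - Sb a b k < aa - bb := by
  have h3 := P3 a b aa bb ha hbanti hasum hbsum k
  have h1 := P1s a aa ha hasum k
  have hbk := hb1' b hb1 hbanti k
  nlinarith [mul_pos (sub_pos.2 hbk) (sub_pos.2 h1)]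

include ha hb1 hbanti in
lemma hxm1 (m : ℕ) : -1 ≤ xq a b m := by
  rcases m with _ | j
  · simp [xq]
  · simp only [xq, Nat.succ_ne_zero, if_false, Nat.succ_sub_one]
    have := SaSb_nonneg a b ha hb1 hbanti j
    linarith

include ha hb0 hb1 hbanti hasum hbsum in
lemma hxneg (m : ℕ) : xq a b m < aa - bb - 1 := by
  rcases m with _ | j
  · have := bblt a b aa bb ha hb0 hb1 hbanti hasum hbsum
    show (if 0 = 0 then (-1:ℚ) else -1 + Sa a (0-1) - Sb a b (0-1)) < aa - bb - 1
    rw [if_pos rfl]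
    linarith
  · simp only [xq, Nat.succ_ne_zero, if_false, Nat.succ_sub_one]
    have := Pabs a b aa bb ha hb1 hbanti hasum hbsum j
    linarith

include ha hb0 hb1 hbanti hasum haa hbsum in
lemma hy0 (m : ℕ) : 0 ≤ yq a b bb m := by
  rcases m with _ | j
  · simp [yq]
  · simp only [yq, Nat.succ_ne_zero, if_false, Nat.succ_sub_one]
    have := Sb_nonneg a b ha hb0 j
    have := bb1 a b aa bb ha hb0 hb1 hbanti hasum haa hbsum
    linarith

include ha hb0 hb1 hbanti hasum haa hbsum in
lemma hypos (m : ℕ) (hm : 1 ≤ m) : 0 < yq a b bb m := by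
  rcases m with _ | j
  · omega
  · simp only [yq, Nat.succ_ne_zero, if_false, Nat.succ_sub_one]
    have := Sb_nonneg a b ha hb0 j
    have := bb1 a b aa bb ha hb0 hb1 hbanti hasum haa hbsum
    linarith

include ha hb0 hbsum in
lemma hy1 (m : ℕ) : yq a b bb m < 1 := by
  rcases m with _ | j
  · norm_num [yq]
  · simp only [yq, Nat.succ_ne_zero, if_false, Nat.succ_sub_one]
    have := P2s a b bb ha hb0 hbsum j
    linarith

include ha hb0 hb1 hbanti hasum haa hbsum in
lemma hxy (m : ℕ) : -1 ≤ xq a b m + yq a b bb m := by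
  rcases m with _ | j
  · norm_num [xq, yq]
  · simp only [xq, yq, Nat.succ_ne_zero, if_false, Nat.succ_sub_one]
    have := Sa_nonneg a ha j
    have := bb1 a b aa bb ha hb0 hb1 hbanti hasum haa hbsum
    linarith

include hb0 in
lemma βpos (k : ℕ) : 0 < βq b k := by
  rcases k with _ | j
  · norm_num [βq]
  · simp only [βq, Nat.succ_ne_zero, if_false, Nat.succ_sub_one]
    exact hb0 j

include hb1 hbanti in
lemma βle1 (k : ℕ) : βq b k ≤ 1 := by
  rcases k with _ | j
  · norm_num [βq]
  · simp only [βq, Nat.succ_ne_zero, if_false, Nat.succ_sub_one]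
    exact (hb1' b hb1 hbanti j).le

include hb1 hbanti in
lemma βanti : StrictAnti (βq b) := by
  apply strictAnti_nat_of_succ_lt
  intro k
  rcases k with _ | j
  · simpa [βq] using hb1
  · simp only [βq, Nat.succ_ne_zero, if_false, Nat.succ_sub_one]
    exact hbanti (Nat.lt_succ_self _)

include ha hb0 hb1 hbanti hasum haa hbsum in
lemma γpos (k : ℕ) : 0 < γq a bb k := by
  rcases k with _ | j
  · have := bb1 a b aa bb ha hb0 hb1 hbanti hasum haa hbsum
    show (0:ℚ) < if 0 = 0 then 1 - bb else a (0-1)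
    rw [if_pos rfl]
    linarith
  · simp only [γq, Nat.succ_ne_zero, if_false, Nat.succ_sub_one]
    exact ha j

lemma stepL (k m : ℕ) :
    Lq a b bb k (m+1) = Lq a b bb k m + γq a bb m * (βq b m - βq b k) := by
  rcases m with _ | j
  · simp only [Lq, xq, yq, βq, γq, if_pos rfl, Nat.succ_ne_zero, if_false, Nat.succ_sub_one]
    norm_num [Sa, Sb]
    ring
  · simp only [Lq, xq, yq, βq, γq, Nat.succ_ne_zero, if_false, Nat.succ_sub_one,
      Sa_succ, Sb_succ]
    ring

include ha hb0 hasum haa hbsum in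
lemma habneg : aa - bb - 1 < 0 := by
  have := bb0 a b bb ha hb0 hbsum
  linarith

include ha hb0 hb1 hbanti hasum haa hbsum in
lemma chain (k m : ℕ) : Lq a b bb k m ≤ Mq a b bb k := by
  have hγ := γpos a b aa bb ha hb0 hb1 hbanti hasum haa hbsum
  have hβa := βanti b hb1 hbanti
  rw [Mq]
  rcases le_or_gt m k with hm | hm
  · have key : ∀ d m', m' + d = k → Lq a b bb k m' ≤ Lq a b bb k k := by
      intro d
      induction d with
      | zero => intro m' h; have : m' = k := by omega
                subst this; exact le_refl _
      | succ d ih =>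
          intro m' h
          have h1 : βq b k < βq b m' := hβa (by omega)
          have h2 : Lq a b bb k m' ≤ Lq a b bb k (m'+1) := by
            rw [stepL]
            nlinarith [hγ m']
          exact h2.trans (ih (m'+1) (by omega))
    exact key (k - m) m (by omega)
  · have key : ∀ m', k ≤ m' → Lq a b bb k m' ≤ Lq a b bb k k := by
      intro m' hm'
      induction m', hm' using Nat.le_induction with
      | base => exact le_refl _
      | succ n hn ih =>
          rw [stepL]
          have h1 : βq b n ≤ βq b k := hβa.antitone hn
          nlinarith [hγ n]
    exact key m hm.le

lemma LqSucc (k : ℕ) : Lq a b bb k (k+1) = Mq a b bb k := by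
  rw [stepL, Mq]; ring

include ha hb0 hb1 hbanti hasum haa hbsum in
lemma Mpos (k : ℕ) : 0 < Mq a b bb k := by
  have hx := hxneg a b aa bb ha hb0 hb1 hbanti hasum hbsum k
  have hy := hy0 a b aa bb ha hb0 hb1 hbanti hasum haa hbsum k
  have hβ0 := βpos b hb0 k
  have hβ1 := βle1 b hb1 hbanti k
  have hneg := habneg a b aa bb ha hb0 hasum haa hbsum
  rw [Mq, Lq]
  nlinarith [mul_pos hβ0 (show (0:ℚ) < -(xq a b k) by linarith),
    mul_nonneg (sub_nonneg.2 hβ1) hy]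

include ha hb0 hb1 hbanti hasum haa hbsum in
lemma corner01 (k : ℕ) : 1 - βq b k ≤ Mq a b bb k := by
  rcases k with _ | j
  · have : Mq a b bb 0 = 1 := by norm_num [Mq, Lq, βq, xq, yq]
    rw [this]; norm_num [βq]
  · have h3 := P3 a b aa bb ha hbanti hasum hbsum j
    have h2 := P2 a b bb ha hb0 hbsum j
    have hsb := Sb_nonneg a b ha hb0 j
    have hbj0 := hb0 j
    have hbj1 := hb1' b hb1 hbanti j
    simp only [Mq, Lq, βq, xq, yq, Nat.succ_ne_zero, if_false, Nat.succ_sub_one]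
    nlinarith [mul_nonneg hbj0.le hsb, mul_nonneg (sub_nonneg.2 h2) hbj0.le]

include ha hb0 hb1 hbanti hasum haa hbsum in
lemma R7pre (k : ℕ) :
    βq b k * xq a b k + (1 - βq b k) * (1 - yq a b bb k) < βq b k * (aa - bb - 1) := by
  rcases k with _ | j
  · have := bblt a b aa bb ha hb0 hb1 hbanti hasum hbsum
    norm_num [βq, xq, yq]
    linarith
  · have h4 := P4 a b aa bb ha hbanti hasum hbsum j
    have hpos := mul_pos (sub_pos.2 (hbanti (lt_add_one j))) (ha (j+1))
    simp only [βq, xq, yq, Nat.succ_ne_zero, if_false, Nat.succ_sub_one]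
    nlinarith

include ha hb0 hb1 hbanti hasum haa hbsum in
lemma R7 (k : ℕ) : ∃ m, 1 ≤ m ∧
    yq a b bb m * (βq b k * xq a b k + (1 - βq b k) * (1 - yq a b bb k)) ≤ βq b k * xq a b m :=
  P5 a b aa bb ha hasum hbsum (βq b k) _
    (R7pre a b aa bb ha hb0 hb1 hbanti hasum haa hbsum k)

lemma xq_succ (k : ℕ) : xq a b (k+1) = xq a b k + γq a bb k * (1 - βq b k) := by
  rcases k with _ | j
  · simp [xq, γq, βq, Sa, Sb]
  · simp only [xq, γq, βq, Nat.succ_ne_zero, if_false, Nat.succ_sub_one, Sa_succ, Sb_succ]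
    ring

lemma yq_succ (k : ℕ) : yq a b bb (k+1) = yq a b bb k + γq a bb k * βq b k := by
  rcases k with _ | j
  · simp [yq, γq, βq, Sa, Sb]
  · simp only [yq, γq, βq, Nat.succ_ne_zero, if_false, Nat.succ_sub_one, Sb_succ]
    ring

lemma Lq_zero (k : ℕ) : Lq a b bb k 0 = βq b k := by
  simp [Lq, xq, yq]

lemma Mq0 : Mq a b bb 0 = 1 := by
  norm_num [Mq, Lq, βq, xq, yq]

lemma WqEq (k : ℕ) : (1 - βq b k) - Mq a b bb k
    = βq b k * xq a b k + (1 - βq b k) * (1 - yq a b bb k) := by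
  simp only [Mq, Lq]; ring

end Hyp

section Gen

variable {K : Type*} [Field K] [LinearOrder K] [IsStrictOrderedRing K]

lemma cross_affine (p r w z : K × K) (s t : K) (hst : s + t = 1) :
    cross p r (s • w + t • z) = s * cross p r w + t * cross p r z := by
  have h : t = 1 - s := by linarith
  subst h
  simp only [cross, Prod.smul_fst, Prod.smul_snd, Prod.fst_add, Prod.snd_add, smul_eq_mul]
  ring

lemma halfPlane_convex (p r : K × K) : Convex K (halfPlane p r) := by
  intro w hw z hz s t hs ht hst
  simp only [halfPlane, Set.mem_setOf_eq] at *
  rw [cross_affine p r w z s t hst, add_mul]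
  exact add_nonneg (by rw [mul_assoc]; exact mul_nonneg hs hw)
    (by rw [mul_assoc]; exact mul_nonneg ht hz)

lemma snd_convex : Convex K {w : K × K | w.2 ≤ 1} := by
  intro w hw z hz s t hs ht hst
  simp only [Set.mem_setOf_eq, Prod.snd_add, Prod.smul_snd, smul_eq_mul] at *
  nlinarith

lemma sum_convex : Convex K {w : K × K | w.1 + w.2 ≤ 1} := by
  intro w hw z hz s t hs ht hst
  simp only [Set.mem_setOf_eq, Prod.snd_add, Prod.fst_add, Prod.smul_snd, Prod.smul_fst,
    smul_eq_mul] at *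
  nlinarith

lemma discD_convex (v : ℕ → K × K) : Convex K (discD v) := by
  intro w hw z hz s t hs ht hst
  obtain ⟨⟨⟨⟨⟨w1, w2⟩, w3⟩, w4⟩, w5⟩, w6⟩ := hw
  obtain ⟨⟨⟨⟨⟨z1, z2⟩, z3⟩, z4⟩, z5⟩, z6⟩ := hz
  simp only [Set.mem_iInter] at w1 z1 w4 z4
  have hneg : -(s • w + t • z) = s • (-w) + t • (-z) := by
    rw [smul_neg, smul_neg, neg_add]
  refine ⟨⟨⟨⟨⟨Set.mem_iInter.2 fun k => halfPlane_convex _ _ (w1 k) (z1 k) hs ht hst, ?_⟩, ?_⟩,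
    Set.mem_iInter.2 fun k => ?_⟩, ?_⟩, ?_⟩
  · exact snd_convex w2 z2 hs ht hst
  · exact sum_convex w3 z3 hs ht hst
  · show -(s • w + t • z) ∈ halfPlane (v k) (v (k+1))
    rw [hneg]
    exact halfPlane_convex _ _ (w4 k) (z4 k) hs ht hst
  · show -(s • w + t • z) ∈ {w : K × K | w.2 ≤ 1}
    rw [hneg]
    exact snd_convex w5 z5 hs ht hst
  · show -(s • w + t • z) ∈ {w : K × K | w.1 + w.2 ≤ 1}
    rw [hneg]
    exact sum_convex w6 z6 hs ht hst

lemma discD_symm (v : ℕ → K × K) : discD v = -discD v := by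
  ext w
  simp only [discD, Set.mem_inter_iff, Set.mem_iInter, Set.mem_neg, Set.mem_setOf_eq,
    neg_neg, Prod.fst_neg, Prod.snd_neg]
  constructor
  · rintro ⟨⟨⟨⟨⟨h1, h2⟩, h3⟩, h4⟩, h5⟩, h6⟩
    refine ⟨⟨⟨⟨⟨fun k => h4 k, by linarith⟩, by linarith⟩, fun k => by simpa using h1 k⟩,
      by simpa using h2⟩, by simpa using h3⟩
  · rintro ⟨⟨⟨⟨⟨h1, h2⟩, h3⟩, h4⟩, h5⟩, h6⟩
    refine ⟨⟨⟨⟨⟨fun k => by simpa using h4 k, by linarith⟩, by linarith⟩, h1⟩,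
      by linarith⟩, by linarith⟩

lemma zero_mem_discD (v : ℕ → K × K) : (0 : K × K) ∈ discD v := by
  have h : ∀ p r : K × K, (0 : K × K) ∈ halfPlane p r := fun p r => mul_self_nonneg _
  refine ⟨⟨⟨⟨⟨Set.mem_iInter.2 fun k => h _ _, by norm_num⟩, by norm_num⟩,
    Set.mem_iInter.2 fun k => by simpa [Set.mem_neg] using h (v k) (v (k+1))⟩,
    by simp [Set.mem_neg]⟩, by simp [Set.mem_neg]⟩

lemma uniqueOfExit {D : Set (K × K)} {u : K × K} {r : K}
    (h : 0 < r ∧ r • u ∈ D ∧ ∀ s : K, r < s → s • u ∉ D) :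
    ∃! r' : K, 0 < r' ∧ r' • u ∈ D ∧ ∀ s : K, r' < s → s • u ∉ D := by
  refine ⟨r, h, ?_⟩
  rintro r' ⟨h1, h2, h3⟩
  by_contra hne
  rcases lt_or_gt_of_ne hne with hlt | hlt
  · exact h3 r hlt h.2.1
  · exact h.2.2 r' hlt h2

lemma normFromDisc {D : Set (K × K)} (hconv : Convex K D)
    (hsym : ∀ w : K × K, w ∈ D ↔ -w ∈ D) (h0 : (0 : K × K) ∈ D)
    (hray : ∀ u : K × K, u ≠ 0 → ∃ r : K, 0 < r ∧ r • u ∈ D ∧ ∀ s : K, r < s → s • u ∉ D) :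
    (∀ u : K × K, u ≠ 0 →
      ∃! r : K, 0 < r ∧ r • u ∈ D ∧ ∀ s : K, r < s → s • u ∉ D) ∧
    ∃ N : K × K → K,
      (∀ u : K × K, N u = 0 ↔ u = 0) ∧
      (∀ (c : K) (u : K × K), N (c • u) = |c| * N u) ∧
      (∀ u w : K × K, N (u + w) ≤ N u + N w) ∧
      D = {u : K × K | N u ≤ 1} := by
  classical
  choose R hR1 hR2 hR3 using hray
  have hRuniq : ∀ (u : K × K) (h : u ≠ 0) (r' : K), 0 < r' → r' • u ∈ D →
      (∀ s : K, r' < s → s • u ∉ D) → r' = R u h := by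
    intro u h r' h1 h2 h3
    by_contra hne
    rcases lt_or_gt_of_ne hne with hlt | hlt
    · exact h3 (R u h) hlt (hR2 u h)
    · exact hR3 u h r' hlt h2
  set N : K × K → K := fun u => if h : u = 0 then 0 else (R u h)⁻¹ with hN
  have hNval : ∀ (u : K × K) (h : u ≠ 0), N u = (R u h)⁻¹ := by
    intro u h; simp [hN, h]
  have hNpos : ∀ (u : K × K), u ≠ 0 → 0 < N u := by
    intro u h; rw [hNval u h]; exact inv_pos.2 (hR1 u h)
  have hNnonneg : ∀ u : K × K, 0 ≤ N u := by
    intro u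
    by_cases h : u = 0
    · simp [hN, h]
    · exact (hNpos u h).le
  have inv_le_one' : ∀ x : K, 1 ≤ x → x⁻¹ ≤ 1 := by
    intro x hx
    have hx0 : 0 < x := lt_of_lt_of_le one_pos hx
    have h := mul_inv_cancel₀ (ne_of_gt hx0)
    nlinarith [inv_pos.2 hx0]
  have one_le_of_inv : ∀ x : K, 0 < x → x⁻¹ ≤ 1 → 1 ≤ x := by
    intro x hx0 hx
    have h := mul_inv_cancel₀ (ne_of_gt hx0)
    nlinarith [inv_pos.2 hx0]
  have hmem : ∀ u : K × K, u ∈ D ↔ N u ≤ 1 := by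
    intro u
    by_cases h : u = 0
    · simp [hN, h, h0]
    · rw [hNval u h]
      constructor
      · intro hu
        have h1 : 1 ≤ R u h := by
          by_contra hc
          push_neg at hc
          exact hR3 u h 1 hc (by simpa using hu)
        exact inv_le_one' _ h1
      · intro hle
        have hRpos := hR1 u h
        have h1 : 1 ≤ R u h := one_le_of_inv _ hRpos hle
        have key := hconv (hR2 u h) h0 (a := (R u h)⁻¹) (b := 1 - (R u h)⁻¹)
          (by positivity) (by rw [sub_nonneg]; exact inv_le_one' _ h1)
          (by ring)
        simpa [smul_smul, inv_mul_cancel₀ (ne_of_gt hRpos)] using key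
  have hhom : ∀ (c : K) (u : K × K), N (c • u) = |c| * N u := by
    intro c u
    by_cases hc : c = 0
    · simp [hc, hN]
    by_cases hu : u = 0
    · simp [hu, hN]
    have hcu : c • u ≠ 0 := smul_ne_zero hc hu
    have habs : 0 < |c| := abs_pos.2 hc
    have hprop : R u hu / |c| = R (c • u) hcu := by
      apply hRuniq
      · exact div_pos (hR1 u hu) habs
      · rcases le_or_gt 0 c with h' | h'
        · have hc0 : 0 < c := lt_of_le_of_ne h' (Ne.symm hc)
          have hac : |c| = c := abs_of_nonneg h'
          rw [hac, smul_smul, div_mul_cancel₀ _ (ne_of_gt hc0)]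
          exact hR2 u hu
        · have hac : |c| = -c := abs_of_neg h'
          rw [hac, smul_smul]
          have he : R u hu / -c * c = -(R u hu) := by
            rw [div_mul_eq_mul_div, mul_div_assoc, div_neg, div_self hc, mul_neg_one]
          rw [he, neg_smul]
          exact (hsym _).1 (hR2 u hu)
      · intro s hs hmem'
        rcases le_or_gt 0 c with h' | h'
        · have hac : |c| = c := abs_of_nonneg h'
          have hc0 : 0 < c := lt_of_le_of_ne h' (Ne.symm hc)
          rw [smul_smul] at hmem'
          have : R u hu < s * c := by
            rw [hac] at hs
            calc R u hu = R u hu / c * c := by field_simp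
            _ < s * c := by apply mul_lt_mul_of_pos_right hs hc0
          exact hR3 u hu (s * c) this hmem'
        · have hac : |c| = -c := abs_of_neg h'
          rw [smul_smul] at hmem'
          have h2 : (s * c) • u = -((s * -c) • u) := by
            rw [← neg_smul]; congr 1; ring
          rw [h2] at hmem'
          have h3 : (s * -c) • u ∈ D := (hsym _).2 (by simpa using hmem')
          have : R u hu < s * -c := by
            rw [hac] at hs
            calc R u hu = R u hu / -c * -c := by field_simp
            _ < s * -c := by apply mul_lt_mul_of_pos_right hs (by linarith)
          exact hR3 u hu (s * -c) this h3
    rw [hNval (c • u) hcu, hNval u hu, ← hprop]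
    rw [div_eq_mul_inv, mul_inv, inv_inv, mul_comm]
  refine ⟨fun u hu => uniqueOfExit ⟨hR1 u hu, hR2 u hu, hR3 u hu⟩, N, ?_, hhom, ?_, ?_⟩
  · intro u
    constructor
    · intro h
      by_contra hu
      exact absurd h (ne_of_gt (hNpos u hu))
    · intro h; simp [hN, h]
  · intro u w
    by_cases hu : u = 0
    · simp [hu, hN]
    by_cases hw : w = 0
    · simp [hw, hN]
    by_cases huw : u + w = 0
    · rw [huw]
      simp only [hN, dif_pos rfl]
      exact add_nonneg (hNnonneg u) (hNnonneg w)
    have hA := hNpos u hu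
    have hB := hNpos w hw
    have hAB : 0 < N u + N w := by linarith
    have humem : (N u)⁻¹ • u ∈ D := by
      rw [hmem, hhom]
      rw [abs_of_pos (by positivity)]
      rw [inv_mul_cancel₀ (ne_of_gt hA)]
    have hwmem : (N w)⁻¹ • w ∈ D := by
      rw [hmem, hhom]
      rw [abs_of_pos (by positivity)]
      rw [inv_mul_cancel₀ (ne_of_gt hB)]
    have hz : (N u + N w)⁻¹ • (u + w) ∈ D := by
      have key := hconv humem hwmem (a := N u / (N u + N w)) (b := N w / (N u + N w))
        (by positivity) (by positivity) (by field_simp)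
      have e1 : (N u / (N u + N w)) • (N u)⁻¹ • u = ((N u + N w)⁻¹) • u := by
        rw [smul_smul]
        congr 1
        field_simp
      have e2 : (N w / (N u + N w)) • (N w)⁻¹ • w = ((N u + N w)⁻¹) • w := by
        rw [smul_smul]
        congr 1
        field_simp
      rw [e1, e2, ← smul_add] at key
      exact key
    have := (hmem _).1 hz
    rw [hhom] at this
    rw [abs_of_pos (by positivity)] at this
    calc N (u + w) = (N u + N w) * ((N u + N w)⁻¹ * N (u + w)) := by
          field_simp
    _ ≤ (N u + N w) * 1 := mul_le_mul_of_nonneg_left this hAB.le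
    _ = N u + N w := mul_one _
  · ext u
    simp only [Set.mem_setOf_eq]
    exact hmem u

end Gen

section Exit
variable {K : Type*} [Field K] [LinearOrder K] [IsStrictOrderedRing K]

set_option maxHeartbeats 1000000 in
lemma exitRay (a b : ℕ → ℚ) (aa bb : ℚ)
    (ha : ∀ k, 0 < a k)
    (hb0 : ∀ k, 0 < b k) (hb1 : b 0 < 1) (hbanti : StrictAnti b)
    (hasum : HasSum (fun k => ((a k : ℝ))) (aa : ℝ)) (haa : aa < 1)
    (hbsum : HasSum (fun k => ((b k * a k : ℚ) : ℝ)) (bb : ℝ))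
    (v : ℕ → K × K)
    (hv0 : v 0 = (-1, 0))
    (hv1 : v 1 = (-1, 1 - (bb : K)))
    (hvrec : ∀ k, v (k + 2) = v (k + 1) + ((((1 - b k) * a k : ℚ) : K), ((b k * a k : ℚ) : K))) :
    ∀ u : K × K, u ≠ 0 →
      ∃ r : K, 0 < r ∧ r • u ∈ discD v ∧ ∀ s : K, r < s → s • u ∉ discD v := by
  classical
  set X : ℕ → K := fun m => ((xq a b m : ℚ) : K) with hX
  set Y : ℕ → K := fun m => ((yq a b bb m : ℚ) : K) with hY
  set B' : ℕ → K := fun k => ((βq b k : ℚ) : K) with hB'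
  set MK : ℕ → K := fun k => ((Mq a b bb k : ℚ) : K) with hMK
  set LK : ℕ → K × K → K := fun k w => (1 - B' k) * w.2 - B' k * w.1 with hLK
  have hvx : ∀ m, v m = (X m, Y m) := by
    intro m
    induction m with
    | zero =>
        rw [hv0]
        simp only [hX, hY, xq, yq, if_pos rfl]
        norm_num
    | succ n ih =>
        rcases n with _ | j
        · rw [hv1]
          have e1 : xq a b 1 = -1 := by norm_num [xq, Sa, Sb]
          have e2 : yq a b bb 1 = 1 - bb := by norm_num [yq, Sa, Sb]
          simp only [hX, hY, e1, e2]
          norm_num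
        · rw [hvrec j, ih]
          have e1 : xq a b (j+2) = xq a b (j+1) + (1 - b j) * a j := by
            simp only [xq, Nat.succ_ne_zero, if_false, Nat.succ_sub_one, Sa_succ, Sb_succ]
            ring
          have e2 : yq a b bb (j+2) = yq a b bb (j+1) + b j * a j := by
            simp only [yq, Nat.succ_ne_zero, if_false, Nat.succ_sub_one, Sb_succ]
            ring
          simp only [hX, hY, e1, e2, Prod.mk_add_mk]
          push_cast
          rfl
  have hBpos : ∀ k, (0:K) < B' k := fun k => by
    simp only [hB']; exact_mod_cast βpos b hb0 k
  have hBle1 : ∀ k, B' k ≤ 1 := fun k => by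
    simp only [hB']; exact_mod_cast βle1 b hb1 hbanti k
  have hMposK : ∀ k, (0:K) < MK k := fun k => by
    simp only [hMK]; exact_mod_cast Mpos a b aa bb ha hb0 hb1 hbanti hasum haa hbsum k
  have hγposK : ∀ k, (0:K) < ((γq a bb k : ℚ):K) := fun k => by
    exact_mod_cast γpos a b aa bb ha hb0 hb1 hbanti hasum haa hbsum k
  have hcross : ∀ k (w : K × K), cross (v k) (v (k+1)) w
      = ((γq a bb k : ℚ):K) * (LK k w - MK k) := by
    intro k w
    rw [hvx k, hvx (k+1)]
    have hxs := xq_succ a b bb k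
    have hys := yq_succ a b bb k
    simp only [cross, hX, hY, hLK, hB', hMK, Mq, Lq, hxs, hys]
    push_cast
    ring
  have hmemH : ∀ k (w : K × K), w ∈ halfPlane (v k) (v (k+1)) ↔ LK k w ≤ MK k := by
    intro k w
    have h00 : cross (v k) (v (k+1)) ((0,0) : K × K) = ((γq a bb k : ℚ):K) * (0 - MK k) := by
      rw [hcross]
      congr 1
      simp [hLK]
    rw [halfPlane, Set.mem_setOf_eq, hcross, h00]
    have hg := hγposK k
    have hm := hMposK k
    constructor
    · intro h
      nlinarith [mul_pos (mul_pos hg hg) hm]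
    · intro h
      nlinarith [mul_pos (mul_pos hg hg) hm]
  have hLKneg : ∀ k (w : K × K), LK k (-w) = -(LK k w) := by
    intro k w
    simp only [hLK, Prod.fst_neg, Prod.snd_neg]
    ring
  have hmemD : ∀ w : K × K, w ∈ discD v ↔
      (∀ k, LK k w ≤ MK k) ∧ w.2 ≤ 1 ∧ w.1 + w.2 ≤ 1 ∧
      (∀ k, -(MK k) ≤ LK k w) ∧ -1 ≤ w.2 ∧ -1 ≤ w.1 + w.2 := by
    intro w
    constructor
    · rintro ⟨⟨⟨⟨⟨h1, h2⟩, h3⟩, h4⟩, h5⟩, h6⟩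
      simp only [Set.mem_iInter] at h1 h4
      refine ⟨fun k => (hmemH k w).1 (h1 k), h2, h3, fun k => ?_, ?_, ?_⟩
      · have := (hmemH k (-w)).1 (Set.mem_neg.1 (h4 k))
        rw [hLKneg] at this
        linarith
      · have : (-w).2 ≤ 1 := Set.mem_neg.1 h5
        rw [Prod.snd_neg] at this
        linarith
      · have : (-w).1 + (-w).2 ≤ 1 := Set.mem_neg.1 h6
        rw [Prod.snd_neg, Prod.fst_neg] at this
        linarith
    · rintro ⟨h1, h2, h3, h4, h5, h6⟩
      refine ⟨⟨⟨⟨⟨Set.mem_iInter.2 fun k => (hmemH k w).2 (h1 k), h2⟩, h3⟩,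
        Set.mem_iInter.2 fun k => Set.mem_neg.2 ((hmemH k (-w)).2 ?_)⟩,
        Set.mem_neg.2 ?_⟩, Set.mem_neg.2 ?_⟩
      · rw [hLKneg]
        linarith [h4 k]
      · show (-w).2 ≤ 1
        rw [Prod.snd_neg]
        linarith
      · show (-w).1 + (-w).2 ≤ 1
        rw [Prod.snd_neg, Prod.fst_neg]
        linarith
  have hLKv : ∀ k m, LK k (X m, Y m) = ((Lq a b bb k m : ℚ) : K) := by
    intro k m
    simp only [hLK, hX, hY, hB', Lq]
    push_cast
    ring
  have hconv := discD_convex v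
  have hvmemD : ∀ m, v m ∈ discD v := by
    intro m
    rw [hmemD, hvx m]
    have hxm := hxneg a b aa bb ha hb0 hb1 hbanti hasum hbsum m
    have hym0 := hy0 a b aa bb ha hb0 hb1 hbanti hasum haa hbsum m
    have hym1 := hy1 a b bb ha hb0 hbsum m
    have hbbneg := habneg a b aa bb ha hb0 hasum haa hbsum
    refine ⟨fun k => ?_, ?_, ?_, fun k => ?_, ?_, ?_⟩
    · rw [hLKv]
      simp only [hMK]
      exact_mod_cast chain a b aa bb ha hb0 hb1 hbanti hasum haa hbsum k m
    · show Y m ≤ 1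
      simp only [hY]
      exact_mod_cast hym1.le
    · show X m + Y m ≤ 1
      have : xq a b m + yq a b bb m ≤ 1 := by linarith
      simp only [hX, hY]
      exact_mod_cast this
    · rw [hLKv]
      have hq : (0:ℚ) ≤ Lq a b bb k m := by
        have hβ0 := βpos b hb0 k
        have hβ1 := βle1 b hb1 hbanti k
        rw [Lq]
        nlinarith
      have : (0:K) ≤ ((Lq a b bb k m : ℚ):K) := by exact_mod_cast hq
      linarith [hMposK k]
    · show -1 ≤ Y m
      simp only [hY]
      have : (-1:ℚ) ≤ yq a b bb m := by linarith
      exact_mod_cast this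
    · show -1 ≤ X m + Y m
      have := hxy a b aa bb ha hb0 hb1 hbanti hasum haa hbsum m
      simp only [hX, hY]
      exact_mod_cast this
  have hc01 : (((0:K),(1:K)) : K × K) ∈ discD v := by
    rw [hmemD]
    refine ⟨fun k => ?_, by norm_num, by norm_num, fun k => ?_, by norm_num, by norm_num⟩
    · have : LK k ((0:K),(1:K)) = 1 - B' k := by simp [hLK]
      rw [this]
      have hcc : ((1 - βq b k : ℚ) : K) ≤ ((Mq a b bb k : ℚ) : K) := by
        exact_mod_cast corner01 a b aa bb ha hb0 hb1 hbanti hasum haa hbsum k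
      push_cast at hcc
      exact hcc
    · have : LK k ((0:K),(1:K)) = 1 - B' k := by simp [hLK]
      rw [this]
      linarith [hBle1 k, hMposK k]
  have hc10 : (((1:K),(0:K)) : K × K) ∈ discD v := by
    rw [hmemD]
    refine ⟨fun k => ?_, by norm_num, by norm_num, fun k => ?_, by norm_num, by norm_num⟩
    · have : LK k ((1:K),(0:K)) = -(B' k) := by simp [hLK]
      rw [this]
      linarith [hBpos k, hMposK k]
    · have he : LK k ((1:K),(0:K)) = -(B' k) := by simp [hLK]
      rw [he]
      have : βq b k ≤ Mq a b bb k := by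
        have := chain a b aa bb ha hb0 hb1 hbanti hasum haa hbsum k 0
        rwa [Lq_zero] at this
      have : B' k ≤ MK k := by
        simp only [hB', hMK]
        exact_mod_cast this
      linarith
  have hLKsmul : ∀ k (t : K) (w : K × K), LK k (t • w) = t * LK k w := by
    intro k t w
    simp only [hLK, Prod.smul_fst, Prod.smul_snd, smul_eq_mul]
    ring
  have main : ∀ u : K × K, (0 < u.2 ∨ (u.2 = 0 ∧ 0 < u.1)) →
      ∃ r : K, 0 < r ∧ r • u ∈ discD v ∧ ∀ s : K, r < s → s • u ∉ discD v := by
    intro u hcond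
    have hu2 : 0 ≤ u.2 := by rcases hcond with h | ⟨h, _⟩; exact h.le; exact le_of_eq h.symm
    rcases le_or_gt 0 u.1 with h1 | h1
    · -- exit through x + y = 1
      have hsum : 0 < u.1 + u.2 := by rcases hcond with h | ⟨h2', h1'⟩ <;> linarith
      refine ⟨(u.1 + u.2)⁻¹, inv_pos.2 hsum, ?_, ?_⟩
      · have hcomb := hconv hc10 hc01 (mul_nonneg (inv_pos.2 hsum).le h1)
          (mul_nonneg (inv_pos.2 hsum).le hu2)
          (show (u.1+u.2)⁻¹ * u.1 + (u.1+u.2)⁻¹ * u.2 = 1 by field_simp)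
        have heq : ((u.1 + u.2)⁻¹ * u.1) • (((1:K),(0:K)) : K × K)
            + ((u.1+u.2)⁻¹ * u.2) • (((0:K),(1:K)) : K × K) = (u.1+u.2)⁻¹ • u := by
          refine Prod.ext ?_ ?_ <;>
            simp only [Prod.fst_add, Prod.snd_add, Prod.smul_fst, Prod.smul_snd,
              smul_eq_mul] <;> ring
        rwa [heq] at hcomb
      · intro s hs hmem'
        rw [hmemD] at hmem'
        have h3 := hmem'.2.2.1
        simp only [Prod.smul_fst, Prod.smul_snd, smul_eq_mul] at h3
        have hinv : (u.1+u.2)⁻¹ * (u.1+u.2) = 1 := inv_mul_cancel₀ (ne_of_gt hsum)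
        nlinarith
    · -- u.1 < 0
      have hu2' : 0 < u.2 := by
        rcases hcond with h | ⟨h2', h1'⟩
        · exact h
        · linarith
      by_cases hσ : ∃ m, 0 ≤ X m * u.2 - Y m * u.1
      · -- exit through the polygonal chain
        have hm0 := Nat.find_spec hσ
        set m0 := Nat.find hσ with hm0def
        have hm01 : m0 ≠ 0 := by
          intro h
          rw [h] at hm0
          have hX0 : X 0 = -1 := by
            simp only [hX, xq, if_pos rfl]; norm_num
          have hY0 : Y 0 = 0 := by
            simp only [hY, yq, if_pos rfl]; norm_num
          rw [hX0, hY0] at hm0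
          nlinarith
        obtain ⟨k0, hk0⟩ : ∃ k0, m0 = k0 + 1 := ⟨m0 - 1, by omega⟩
        have hσ1 : X k0 * u.2 - Y k0 * u.1 < 0 := by
          have := Nat.find_min hσ (show k0 < m0 by omega)
          push_neg at this
          exact this
        have hσ2 : 0 ≤ X m0 * u.2 - Y m0 * u.1 := hm0
        have hden : 0 < (X m0 * u.2 - Y m0 * u.1) - (X k0 * u.2 - Y k0 * u.1) := by linarith
        set lam := (-(X k0 * u.2 - Y k0 * u.1)) / ((X m0 * u.2 - Y m0 * u.1) - (X k0 * u.2 - Y k0 * u.1)) with hlam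
        have hlam0 : 0 < lam := div_pos (by linarith) hden
        have hlam1 : lam ≤ 1 := by
          rw [div_le_one hden]
          linarith
        have hp := hconv (hvmemD k0) (hvmemD m0) (by linarith : (0:K) ≤ 1 - lam) hlam0.le
          (by ring)
        set p := (1 - lam) • v k0 + lam • v m0 with hpdef
        have hpc : p = ((1-lam) * X k0 + lam * X m0, (1-lam) * Y k0 + lam * Y m0) := by
          rw [hpdef, hvx k0, hvx m0]
          refine Prod.ext ?_ ?_ <;>
            simp only [Prod.fst_add, Prod.snd_add, Prod.smul_fst, Prod.smul_snd, smul_eq_mul]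
        have hYk0 : (0:K) ≤ Y k0 := by
          simp only [hY]
          exact_mod_cast hy0 a b aa bb ha hb0 hb1 hbanti hasum haa hbsum k0
        have hYm0 : (0:K) < Y m0 := by
          simp only [hY]
          exact_mod_cast hypos a b aa bb ha hb0 hb1 hbanti hasum haa hbsum m0 (by omega)
        have hp2 : 0 < p.2 := by
          rw [hpc]
          have : (0:K) ≤ (1 - lam) * Y k0 := mul_nonneg (by linarith) hYk0
          have h2 : (0:K) < lam * Y m0 := mul_pos hlam0 hYm0
          show 0 < (1-lam) * Y k0 + lam * Y m0
          linarith
        have hrpos : 0 < p.2 / u.2 := div_pos hp2 hu2'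
        have hdet : p.1 * u.2 - p.2 * u.1 = 0 := by
          have hl : lam * ((X m0 * u.2 - Y m0 * u.1) - (X k0 * u.2 - Y k0 * u.1))
              = -(X k0 * u.2 - Y k0 * u.1) := by
            rw [hlam]
            exact div_mul_cancel₀ _ (ne_of_gt hden)
          rw [hpc]
          simp only
          linear_combination hl
        have hpu : p = (p.2 / u.2) • u := by
          refine Prod.ext ?_ ?_
          · show p.1 = (p.2 / u.2) * u.1
            rw [div_mul_eq_mul_div, eq_div_iff (ne_of_gt hu2')]
            linarith [hdet]
          · show p.2 = (p.2 / u.2) * u.2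
            rw [div_mul_eq_mul_div, mul_div_assoc, div_self (ne_of_gt hu2'), mul_one]
        have hL1 : LK k0 (X k0, Y k0) = MK k0 := by
          rw [hLKv]
          simp only [hMK, Mq]
        have hL2 : LK k0 (X m0, Y m0) = MK k0 := by
          rw [hk0, hLKv]
          simp only [hMK]
          exact_mod_cast LqSucc a b bb k0
        have hbind : LK k0 p = MK k0 := by
          have e : LK k0 p = (1 - lam) * LK k0 (X k0, Y k0) + lam * LK k0 (X m0, Y m0) := by
            rw [hpc]
            simp only [hLK]
            ring
          rw [e, hL1, hL2]
          ring
        have hrL : (p.2 / u.2) * LK k0 u = MK k0 := by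
          rw [← hLKsmul, ← hpu]
          exact hbind
        have hLupos : 0 < LK k0 u := by
          by_contra hc
          push_neg at hc
          have : (p.2 / u.2) * LK k0 u ≤ 0 := mul_nonpos_of_nonneg_of_nonpos hrpos.le hc
          linarith [hMposK k0]
        refine ⟨p.2 / u.2, hrpos, by rw [← hpu]; exact hp, ?_⟩
        intro s hs hmem'
        rw [hmemD] at hmem'
        have hup := hmem'.1 k0
        rw [hLKsmul] at hup
        have hlt := mul_lt_mul_of_pos_right hs hLupos
        rw [hrL] at hlt
        linarith
      · -- exit through y = 1
        push_neg at hσ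
        have hCk : ∀ k, (1 - B' k) * u.2 - B' k * u.1 ≤ MK k * u.2 := by
          intro k
          by_contra hc
          push_neg at hc
          have hW : ((1:K) - B' k) - MK k
              = (((βq b k * xq a b k + (1 - βq b k) * (1 - yq a b bb k)) : ℚ) : K) := by
            simp only [hB', hMK]
            exact_mod_cast WqEq a b bb k
          obtain ⟨m, hm1, hm2⟩ := R7 a b aa bb ha hb0 hb1 hbanti hasum haa hbsum k
          have hm2K : Y m * (((βq b k * xq a b k + (1 - βq b k) * (1 - yq a b bb k)) : ℚ) : K)
              ≤ B' k * X m := by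
            simp only [hX, hY, hB']
            exact_mod_cast hm2
          have hYm : (0:K) < Y m := by
            simp only [hY]
            exact_mod_cast hypos a b aa bb ha hb0 hb1 hbanti hasum haa hbsum m hm1
          have hσm := hσ m
          have hBu : B' k * u.1
              < (((βq b k * xq a b k + (1 - βq b k) * (1 - yq a b bb k)) : ℚ) : K) * u.2 := by
            rw [← hW]
            nlinarith
          have t1 := mul_lt_mul_of_pos_left hBu hYm
          have t2 := mul_le_mul_of_nonneg_right hm2K hu2'.le
          have t3 : B' k * (X m * u.2 - Y m * u.1) < 0 :=
            mul_neg_of_pos_of_neg (hBpos k) hσm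
          nlinarith
        have hq1 : u.1 / u.2 < 0 := div_neg_of_neg_of_pos h1 hu2'
        have hd : u.1 / u.2 * u.2 = u.1 := div_mul_cancel₀ _ (ne_of_gt hu2')
        have hp1 : ((u.2)⁻¹ • u).1 = u.1 / u.2 := by
          simp only [Prod.smul_fst, smul_eq_mul]
          rw [div_eq_inv_mul]
        have hp2 : ((u.2)⁻¹ • u).2 = 1 := by
          simp only [Prod.smul_snd, smul_eq_mul]
          exact inv_mul_cancel₀ (ne_of_gt hu2')
        refine ⟨(u.2)⁻¹, inv_pos.2 hu2', ?_, ?_⟩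
        · rw [hmemD]
          refine ⟨fun k => ?_, by rw [hp2], ?_, fun k => ?_, ?_, ?_⟩
          · show (1 - B' k) * ((u.2)⁻¹ • u).2 - B' k * ((u.2)⁻¹ • u).1 ≤ MK k
            rw [hp1, hp2]
            have e : (1 - B' k) * 1 - B' k * (u.1 / u.2)
                = ((1 - B' k) * u.2 - B' k * u.1) / u.2 := by
              field_simp
            rw [e, div_le_iff₀ hu2']
            exact hCk k
          · rw [hp1, hp2]
            linarith
          · show -(MK k) ≤ (1 - B' k) * ((u.2)⁻¹ • u).2 - B' k * ((u.2)⁻¹ • u).1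
            rw [hp1, hp2]
            nlinarith [mul_pos (hBpos k) (neg_pos.2 hq1), hBle1 k, hMposK k]
          · rw [hp2]
            linarith
          · rw [hp1, hp2]
            have hB0 : B' 0 = 1 := by
              simp only [hB', βq, if_pos rfl]
              norm_num
            have hM0 : MK 0 = 1 := by
              simp only [hMK]
              exact_mod_cast Mq0 a b bb
            have hck := hCk 0
            rw [hB0, hM0] at hck
            have : (-1:K) ≤ u.1 / u.2 := by
              rw [le_div_iff₀ hu2']
              linarith
            linarith
        · intro s hs hmem'
          rw [hmemD] at hmem'
          have h2' := hmem'.2.1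
          simp only [Prod.smul_snd, smul_eq_mul] at h2'
          have hinv : (u.2)⁻¹ * u.2 = 1 := inv_mul_cancel₀ (ne_of_gt hu2')
          nlinarith
  -- reduce the general case to `main` via central symmetry
  have hsymm := discD_symm v
  have hsymD : ∀ w : K × K, w ∈ discD v → -w ∈ discD v := by
    intro w h
    rw [hsymm]
    exact Set.mem_neg.2 (by simpa using h)
  have transfer : ∀ u : K × K,
      (∃ r : K, 0 < r ∧ r • (-u) ∈ discD v ∧ ∀ s : K, r < s → s • (-u) ∉ discD v) →
      ∃ r : K, 0 < r ∧ r • u ∈ discD v ∧ ∀ s : K, r < s → s • u ∉ discD v := by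
    rintro u ⟨r, hr0, hr1, hr2⟩
    refine ⟨r, hr0, ?_, ?_⟩
    · have := hsymD _ hr1
      simpa [smul_neg] using this
    · intro s hs hm
      apply hr2 s hs
      have := hsymD _ hm
      simpa [smul_neg] using this
  intro u hu
  rcases lt_trichotomy (0:K) u.2 with h2 | h2 | h2
  · exact main u (Or.inl h2)
  · rcases lt_trichotomy (0:K) u.1 with h1 | h1 | h1
    · exact main u (Or.inr ⟨h2.symm, h1⟩)
    · exact absurd (Prod.ext h1.symm h2.symm) hu
    · refine transfer u (main (-u) (Or.inr ⟨?_, ?_⟩))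
      · rw [Prod.snd_neg, ← h2, neg_zero]
      · rw [Prod.fst_neg]
        linarith
  · refine transfer u (main (-u) (Or.inl ?_))
    rw [Prod.snd_neg]
    linarith

end Exit
end S14

theorem stmt14 {K : Type*} [Field K] [LinearOrder K] [IsStrictOrderedRing K]
    (a b : ℕ → ℚ) (aa bb : ℚ)
    (ha : ∀ k, 0 < a k)
    (hb0 : ∀ k, 0 < b k) (hb1 : b 0 < 1) (hbanti : StrictAnti b)
    (hasum : HasSum (fun k => ((a k : ℝ))) (aa : ℝ)) (haa : aa < 1)
    (hbsum : HasSum (fun k => ((b k * a k : ℚ) : ℝ)) (bb : ℝ))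
    (hab : aa - bb - 1 < 0)
    (v : ℕ → K × K)
    (hv0 : v 0 = (-1, 0))
    (hv1 : v 1 = (-1, 1 - (bb : K)))
    (hvrec : ∀ k, v (k + 2) = v (k + 1) + ((((1 - b k) * a k : ℚ) : K), ((b k * a k : ℚ) : K))) :
    Convex K (discD v) ∧ discD v = -discD v ∧
    (∀ u : K × K, u ≠ 0 →
      ∃! r : K, 0 < r ∧ r • u ∈ discD v ∧ ∀ s : K, r < s → s • u ∉ discD v) ∧
    ∃ N : K × K → K,
      (∀ u : K × K, N u = 0 ↔ u = 0) ∧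
      (∀ (c : K) (u : K × K), N (c • u) = |c| * N u) ∧
      (∀ u w : K × K, N (u + w) ≤ N u + N w) ∧
      discD v = {u : K × K | N u ≤ 1} := by
  have hsymm := S14.discD_symm v
  have hsymD : ∀ w : K × K, w ∈ discD v ↔ -w ∈ discD v := by
    intro w
    constructor
    · intro h
      rw [hsymm]
      exact Set.mem_neg.2 (by simpa using h)
    · intro h
      rw [hsymm]
      exact Set.mem_neg.2 h
  have hray := S14.exitRay a b aa bb ha hb0 hb1 hbanti hasum haa hbsum v hv0 hv1 hvrec
  obtain ⟨h3, hN⟩ := S14.normFromDisc (S14.discD_convex v) hsymD (S14.zero_mem_discD v) hray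
  exact ⟨S14.discD_convex v, hsymm, h3, hN⟩
end

section
/- The intersection of the disc D of the construction with the closed north-east quadrant of K² is the triangle with vertices 0, e₁, e₂, i.e. {(x, y) | x ≥ 0, y ≥ 0, x + y ≤ 1}. -/
open Pointwise

lemma mul_nonneg_of_np_np {K : Type*} [Field K] [LinearOrder K] [IsStrictOrderedRing K] {x y : K}
    (hx : x ≤ 0) (hy : y ≤ 0) : 0 ≤ x * y := by nlinarith

lemma crossPos {K : Type*} [Field K] [LinearOrder K] [IsStrictOrderedRing K] (A B C x y : K)
    (h1 : 0 ≤ (C + A) * C) (h2 : 0 ≤ (C - B) * C)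
    (hx : 0 ≤ x) (hy : 0 ≤ y) (hxy : x + y ≤ 1) :
    0 ≤ (C + A * y - B * x) * C := by
  have key : (C + A * y - B * x) * C
      = (1 - x - y) * (C * C) + y * ((C + A) * C) + x * ((C - B) * C) := by ring
  rw [key]
  have h3 : 0 ≤ (1 - x - y) * (C * C) :=
    mul_nonneg (by linarith) (mul_self_nonneg C)
  have h4 : 0 ≤ y * ((C + A) * C) := mul_nonneg hy h1
  have h5 : 0 ≤ x * ((C - B) * C) := mul_nonneg hx h2
  linarith

lemma cross_eq {K : Type*} [Field K] [LinearOrder K] [IsStrictOrderedRing K] (p r w : K × K) :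
    cross p r w = cross p r (0, 0) + (r.1 - p.1) * w.2 - (r.2 - p.2) * w.1 := by
  simp only [cross]
  ring

/-- If the four "origin-side" conditions hold, the triangle and its negation lie in the
half-plane. -/
lemma tri_mem {K : Type*} [Field K] [LinearOrder K] [IsStrictOrderedRing K] (p r : K × K)
    (hpA : 0 ≤ (cross p r (0,0) + (r.1 - p.1)) * cross p r (0,0))
    (hmA : 0 ≤ (cross p r (0,0) - (r.1 - p.1)) * cross p r (0,0))
    (hpB : 0 ≤ (cross p r (0,0) + (r.2 - p.2)) * cross p r (0,0))
    (hmB : 0 ≤ (cross p r (0,0) - (r.2 - p.2)) * cross p r (0,0))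
    (w : K × K) (hx : 0 ≤ w.1) (hy : 0 ≤ w.2) (hxy : w.1 + w.2 ≤ 1) :
    w ∈ halfPlane p r ∧ -w ∈ halfPlane p r := by
  set A := r.1 - p.1 with hA
  set B := r.2 - p.2 with hB
  set C := cross p r (0,0) with hC
  constructor
  · show 0 ≤ cross p r w * cross p r (0,0)
    rw [cross_eq]
    have := crossPos A B C w.1 w.2 hpA hmB hx hy hxy
    calc (0:K) ≤ (C + A * w.2 - B * w.1) * C := this
      _ = (C + A * w.2 - B * w.1) * cross p r (0,0) := rfl
  · show 0 ≤ cross p r (-w) * cross p r (0,0)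
    rw [cross_eq]
    have := crossPos (-A) (-B) C w.1 w.2 (by rw [← sub_eq_add_neg]; exact hmA)
      (by rw [sub_neg_eq_add]; exact hpB) hx hy hxy
    have heq : C + A * (-w).2 - B * (-w).1 = C + (-A) * w.2 - (-B) * w.1 := by
      simp only [Prod.fst_neg, Prod.snd_neg]; ring
    rw [heq]
    exact this

theorem stmt15 {K : Type*} [Field K] [LinearOrder K] [IsStrictOrderedRing K]
    (a b : ℕ → ℚ) (aa bb : ℚ)
    (ha : ∀ k, 0 < a k)
    (hb0 : ∀ k, 0 < b k) (hb1 : b 0 < 1) (hbanti : StrictAnti b)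
    (hasum : HasSum (fun k => ((a k : ℝ))) (aa : ℝ)) (haa : aa < 1)
    (hbsum : HasSum (fun k => ((b k * a k : ℚ) : ℝ)) (bb : ℝ))
    (hab : aa - bb - 1 < 0)
    (v : ℕ → K × K)
    (hv0 : v 0 = (-1, 0))
    (hv1 : v 1 = (-1, 1 - (bb : K)))
    (hvrec : ∀ k, v (k + 2) = v (k + 1) + ((((1 - b k) * a k : ℚ) : K), ((b k * a k : ℚ) : K))) :
    discD v ∩ {w : K × K | 0 ≤ w.1 ∧ 0 ≤ w.2}
      = {w : K × K | 0 ≤ w.1 ∧ 0 ≤ w.2 ∧ w.1 + w.2 ≤ 1} := by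
  -- partial sums
  set Sq : ℕ → ℚ := fun n => ∑ j ∈ Finset.range n, a j with hSq
  set Tq : ℕ → ℚ := fun n => ∑ j ∈ Finset.range n, b j * a j with hTq
  set Uq : ℕ → ℚ := fun n => ∑ j ∈ Finset.range n, (1 - b j) * a j with hUq
  -- closed form for the vertices
  have hv : ∀ n, v (n+1) = (((-1 + Uq n : ℚ) : K), ((1 - bb + Tq n : ℚ) : K)) := by
    intro n
    induction n with
    | zero =>
      have h0 : Uq 0 = 0 := by simp [hUq]
      have h1 : Tq 0 = 0 := by simp [hTq]
      show v 1 = _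
      rw [hv1, h0, h1, Prod.mk.injEq]
      constructor <;> (push_cast; ring)
    | succ m ih =>
      rw [hvrec m, ih]
      have hU' : Uq (m+1) = Uq m + (1 - b m) * a m := Finset.sum_range_succ _ m
      have hT' : Tq (m+1) = Tq m + b m * a m := Finset.sum_range_succ _ m
      rw [Prod.ext_iff]
      constructor
      · show ((-1 + Uq m : ℚ) : K) + (((1 - b m) * a m : ℚ) : K) = ((-1 + Uq (m+1) : ℚ) : K)
        rw [hU']; push_cast; ring
      · show ((1 - bb + Tq m : ℚ) : K) + ((b m * a m : ℚ) : K) = ((1 - bb + Tq (m+1) : ℚ) : K)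
        rw [hT']; push_cast; ring
  -- facts about the sums
  have hS0 : ∀ n, 0 ≤ Sq n := fun n =>
    Finset.sum_nonneg fun j _ => (ha j).le
  have hSaa : ∀ n, Sq n ≤ aa := by
    intro n
    have h1 : ∑ j ∈ Finset.range n, ((a j : ℝ)) ≤ (aa : ℝ) :=
      sum_le_hasSum _ (fun i _ => by exact_mod_cast (ha i).le) hasum
    have h2 : ((Sq n : ℚ) : ℝ) = ∑ j ∈ Finset.range n, ((a j : ℝ)) := by
      simp [hSq]
    rw [← h2] at h1
    exact_mod_cast h1
  have hbn1 : ∀ n, b n < 1 := fun n =>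
    lt_of_le_of_lt (hbanti.antitone (Nat.zero_le n)) hb1
  have hUS : ∀ n, Uq n ≤ (1 - b n) * Sq n := by
    intro n
    have h1 : Uq n ≤ ∑ j ∈ Finset.range n, (1 - b n) * a j := by
      apply Finset.sum_le_sum
      intro j hj
      have hbj : b n ≤ b j := hbanti.antitone (Nat.le_of_lt (Finset.mem_range.mp hj))
      exact mul_le_mul_of_nonneg_right (by linarith) (ha j).le
    rw [← Finset.mul_sum] at h1
    exact h1
  -- tail estimate (proved over ℝ)
  have hTT : ∀ n, bb - Tq n ≤ b n * (aa - Sq n) := by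
    intro n
    have hTsum : ((Tq n : ℚ) : ℝ) = ∑ i ∈ Finset.range n, ((b i * a i : ℚ) : ℝ) := by
      simp only [hTq]
      push_cast
      ring
    have hSsum : ((Sq n : ℚ) : ℝ) = ∑ i ∈ Finset.range n, ((a i : ℚ) : ℝ) := by
      simp only [hSq]
      push_cast
      ring
    have htailb : HasSum (fun k => ((b (k+n) * a (k+n) : ℚ) : ℝ)) ((bb : ℝ) - ((Tq n : ℚ) : ℝ)) := by
      refine (hasSum_nat_add_iff (f := fun k => ((b k * a k : ℚ) : ℝ)) n).mpr ?_
      rw [← hTsum, sub_add_cancel]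
      exact hbsum
    have htaila : HasSum (fun k => ((a (k+n) : ℚ) : ℝ)) ((aa : ℝ) - ((Sq n : ℚ) : ℝ)) := by
      refine (hasSum_nat_add_iff (f := fun k => ((a k : ℚ) : ℝ)) n).mpr ?_
      rw [← hSsum, sub_add_cancel]
      exact hasum
    have htaila' : HasSum (fun k => ((b n : ℚ) : ℝ) * ((a (k+n) : ℚ) : ℝ))
        (((b n : ℚ) : ℝ) * ((aa : ℝ) - ((Sq n : ℚ) : ℝ))) := htaila.mul_left _
    have hle : ((bb : ℝ) - ((Tq n : ℚ) : ℝ)) ≤ ((b n : ℚ) : ℝ) * ((aa : ℝ) - ((Sq n : ℚ) : ℝ)) := by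
      apply hasSum_le _ htailb htaila'
      intro k
      have hb' : b (k+n) ≤ b n := hbanti.antitone (Nat.le_add_left n k)
      have : (b (k+n) * a (k+n) : ℚ) ≤ b n * a (k+n) :=
        mul_le_mul_of_nonneg_right hb' (ha _).le
      push_cast
      exact_mod_cast this
    exact_mod_cast hle
  -- the key sign conditions for each edge, proved over ℚ then cast to K
  have hcond : ∀ k,
      (0 ≤ (cross (v k) (v (k+1)) (0,0) + ((v (k+1)).1 - (v k).1)) * cross (v k) (v (k+1)) (0,0)) ∧
      (0 ≤ (cross (v k) (v (k+1)) (0,0) - ((v (k+1)).1 - (v k).1)) * cross (v k) (v (k+1)) (0,0)) ∧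
      (0 ≤ (cross (v k) (v (k+1)) (0,0) + ((v (k+1)).2 - (v k).2)) * cross (v k) (v (k+1)) (0,0)) ∧
      (0 ≤ (cross (v k) (v (k+1)) (0,0) - ((v (k+1)).2 - (v k).2)) * cross (v k) (v (k+1)) (0,0)) := by
    intro k
    match k with
    | 0 =>
      rw [hv0, hv1]
      simp only [cross]
      refine ⟨?_, ?_, ?_, ?_⟩ <;> nlinarith [sq_nonneg (1 - (bb : K)), sq_nonneg (bb : K)]
    | (n+1) =>
      -- rational data
      set E : ℚ := -1 + b n * Uq n + (1 - b n) * (bb - Tq n) with hE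
      have hEbound : E ≤ -1 + b n * (1 - b n) := by
        have h1 : b n * Uq n ≤ b n * ((1 - b n) * Sq n) :=
          mul_le_mul_of_nonneg_left (hUS n) (hb0 n).le
        have h2 : (1 - b n) * (bb - Tq n) ≤ (1 - b n) * (b n * (aa - Sq n)) :=
          mul_le_mul_of_nonneg_left (hTT n) (by linarith [hbn1 n])
        have h3 : b n * ((1 - b n) * Sq n) + (1 - b n) * (b n * (aa - Sq n))
            = b n * (1 - b n) * aa := by ring
        have h4 : b n * (1 - b n) * aa ≤ b n * (1 - b n) := by
          have : 0 ≤ b n * (1 - b n) :=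
            mul_nonneg (hb0 n).le (by linarith [hbn1 n])
          nlinarith
        linarith
      have hE1 : E + b n ≤ 0 := by nlinarith [sq_nonneg (1 - b n)]
      have hE2 : E + (1 - b n) ≤ 0 := by nlinarith [sq_nonneg (b n)]
      have hE0 : E ≤ 0 := by nlinarith [hb0 n, hbn1 n]
      set Aq : ℚ := (1 - b n) * a n with hAq
      set Bq : ℚ := b n * a n with hBq
      set Cq : ℚ := a n * E with hCq
      have hCq0 : Cq ≤ 0 := mul_nonpos_of_nonneg_of_nonpos (ha n).le hE0
      have hq1 : 0 ≤ (Cq + Aq) * Cq := by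
        apply mul_nonneg_of_np_np _ hCq0
        have : Cq + Aq = a n * (E + (1 - b n)) := by rw [hCq, hAq]; ring
        rw [this]
        exact mul_nonpos_of_nonneg_of_nonpos (ha n).le hE2
      have hq2 : 0 ≤ (Cq - Aq) * Cq := by
        apply mul_nonneg_of_np_np _ hCq0
        have : Cq - Aq = a n * (E - (1 - b n)) := by rw [hCq, hAq]; ring
        rw [this]
        apply mul_nonpos_of_nonneg_of_nonpos (ha n).le
        have := hbn1 n
        linarith
      have hq3 : 0 ≤ (Cq + Bq) * Cq := by
        apply mul_nonneg_of_np_np _ hCq0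
        have : Cq + Bq = a n * (E + b n) := by rw [hCq, hBq]; ring
        rw [this]
        exact mul_nonpos_of_nonneg_of_nonpos (ha n).le hE1
      have hq4 : 0 ≤ (Cq - Bq) * Cq := by
        apply mul_nonneg_of_np_np _ hCq0
        have : Cq - Bq = a n * (E - b n) := by rw [hCq, hBq]; ring
        rw [this]
        apply mul_nonpos_of_nonneg_of_nonpos (ha n).le
        have := hb0 n
        linarith
      -- now transfer to K
      have hp : v (n+1) = (((-1 + Uq n : ℚ) : K), ((1 - bb + Tq n : ℚ) : K)) := hv n
      have hr : v (n+2) = (((-1 + Uq (n+1) : ℚ) : K), ((1 - bb + Tq (n+1) : ℚ) : K)) := hv (n+1)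
      have hAK : (v (n+2)).1 - (v (n+1)).1 = ((Aq : ℚ) : K) := by
        rw [hp, hr]
        have hU' : Uq (n+1) = Uq n + (1 - b n) * a n := Finset.sum_range_succ _ n
        simp only [hU', hAq]
        push_cast
        ring
      have hBK : (v (n+2)).2 - (v (n+1)).2 = ((Bq : ℚ) : K) := by
        rw [hp, hr]
        have hT' : Tq (n+1) = Tq n + b n * a n := Finset.sum_range_succ _ n
        simp only [hT', hBq]
        push_cast
        ring
      have hCK : cross (v (n+1)) (v (n+2)) (0,0) = ((Cq : ℚ) : K) := by
        simp only [cross]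
        rw [hAK, hBK, hp]
        simp only [hCq, hAq, hBq, hE]
        push_cast
        ring
      refine ⟨?_, ?_, ?_, ?_⟩
      · rw [hCK, hAK]; exact_mod_cast hq1
      · rw [hCK, hAK]; exact_mod_cast hq2
      · rw [hCK, hBK]; exact_mod_cast hq3
      · rw [hCK, hBK]; exact_mod_cast hq4
  -- the set equality
  ext w
  simp only [Set.mem_inter_iff, Set.mem_setOf_eq, discD, Set.mem_iInter, Set.mem_neg,
    Prod.fst_neg, Prod.snd_neg]
  constructor
  · rintro ⟨⟨⟨⟨⟨⟨_, _⟩, hxy⟩, _⟩, _⟩, _⟩, hx, hy⟩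
    exact ⟨hx, hy, hxy⟩
  · rintro ⟨hx, hy, hxy⟩
    have hmem : ∀ k, w ∈ halfPlane (v k) (v (k+1)) ∧ -w ∈ halfPlane (v k) (v (k+1)) := by
      intro k
      obtain ⟨c1, c2, c3, c4⟩ := hcond k
      exact tri_mem (v k) (v (k+1)) c1 c2 c3 c4 w hx hy hxy
    refine ⟨⟨⟨⟨⟨⟨fun k => (hmem k).1, by linarith⟩, hxy⟩,
      fun k => (hmem k).2⟩, by linarith⟩, by linarith⟩, hx, hy⟩
end

section
/- Let V = X × W be the 1-sum of two normed spaces over an ordered field K, with norm ‖(v, w)‖ = ‖v‖_X + ‖w‖_W. Then a point (v, w) with ‖(v,w)‖ = r > 0 is an extreme point of the sphere S_r = {u | ‖u‖ = r} (meaning: whenever (v,w) is the midpoint of two points of S_r, both equal (v,w)) only if v = 0 or w = 0. -/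
theorem stmt16 {K X W : Type*} [Field K] [LinearOrder K] [IsStrictOrderedRing K]
    [AddCommGroup X] [Module K X] [AddCommGroup W] [Module K W]
    (NX : X → K) (NW : W → K)
    (hX0 : ∀ x : X, NX x = 0 ↔ x = 0)
    (hXh : ∀ (c : K) (x : X), NX (c • x) = |c| * NX x)
    (hXt : ∀ x y : X, NX (x + y) ≤ NX x + NX y)
    (hW0 : ∀ w : W, NW w = 0 ↔ w = 0)
    (hWh : ∀ (c : K) (w : W), NW (c • w) = |c| * NW w)
    (hWt : ∀ w z : W, NW (w + z) ≤ NW w + NW z)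
    (r : K) (hr : 0 < r) (v : X) (w : W) (hvw : NX v + NW w = r)
    (hext : ∀ u₁ u₂ : X × W,
      NX u₁.1 + NW u₁.2 = r → NX u₂.1 + NW u₂.2 = r →
      (v, w) = (2⁻¹ : K) • (u₁ + u₂) → u₁ = (v, w) ∧ u₂ = (v, w)) :
    v = 0 ∨ w = 0 := by
  by_contra h
  push_neg at h
  obtain ⟨hv, hw⟩ := h
  set a := NX v with ha
  set b := NW w with hb
  have haN : 0 ≤ a := by
    have h2 := hXt v (-v)
    have h3 : NX (-v) = NX v := by
      have := hXh (-1) v; simpa using this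
    rw [add_neg_cancel, (hX0 (0 : X)).mpr rfl, h3] at h2
    linarith [h2]
  have ha0 : 0 < a := haN.lt_of_ne fun h => hv ((hX0 v).mp h.symm)
  have hbN : 0 ≤ b := by
    have h2 := hWt w (-w)
    have h3 : NW (-w) = NW w := by
      have := hWh (-1) w; simpa using this
    rw [add_neg_cancel, (hW0 (0 : W)).mpr rfl, h3] at h2
    linarith [h2]
  have hb0 : 0 < b := hbN.lt_of_ne fun h => hw ((hW0 w).mp h.symm)
  set ε := min a b / 2 with hε
  have hε0 : 0 < ε := by positivity
  have hεa : ε < a := by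
    have : min a b ≤ a := min_le_left a b
    simp only [hε]; linarith
  have hεb : ε < b := by
    have : min a b ≤ b := min_le_right a b
    simp only [hε]; linarith
  set u₁ : X × W := (((a + ε) / a) • v, ((b - ε) / b) • w) with hu₁
  set u₂ : X × W := (((a - ε) / a) • v, ((b + ε) / b) • w) with hu₂
  have hn1 : NX u₁.1 + NW u₁.2 = r := by
    simp only [hu₁, hXh, hWh]
    rw [abs_of_pos (div_pos (by linarith) ha0), abs_of_pos (div_pos (by linarith) hb0)]
    field_simp
    rw [← ha, ← hb, ← hvw]; ring
  have hn2 : NX u₂.1 + NW u₂.2 = r := by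
    simp only [hu₂, hXh, hWh]
    rw [abs_of_pos (div_pos (by linarith) ha0), abs_of_pos (div_pos (by linarith) hb0)]
    field_simp
    rw [← ha, ← hb, ← hvw]; ring
  have hmid : (v, w) = (2⁻¹ : K) • (u₁ + u₂) := by
    simp only [hu₁, hu₂, Prod.smul_mk, Prod.mk_add_mk, Prod.mk.injEq, smul_smul, ← add_smul]
    constructor
    · rw [show (2⁻¹ : K) * ((a + ε) / a + (a - ε) / a) = 1 by field_simp; ring, one_smul]
    · rw [show (2⁻¹ : K) * ((b - ε) / b + (b + ε) / b) = 1 by field_simp; ring, one_smul]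
  obtain ⟨h1, _⟩ := hext u₁ u₂ hn1 hn2 hmid
  have h1' : ((a + ε) / a) • v = v := congrArg Prod.fst h1
  have : ((a + ε) / a - 1) • v = 0 := by
    rw [sub_smul, one_smul, h1', sub_self]
  have hc : (a + ε) / a - 1 ≠ 0 := by
    have h4 : (1 : K) < (a + ε) / a := (one_lt_div ha0).mpr (by linarith)
    linarith
  exact hv (by
    have := smul_eq_zero.mp this
    rcases this with h | h
    · exact absurd h hc
    · exact h)
end

section
/- Let W be a vector space over an ordered field K with basis b₁, ..., b_n and the 1-norm ‖∑ c_i b_i‖ = ∑ |c_i|. Then for r > 0 the extreme points of the sphere S_r = {w | ‖w‖ = r} are exactly the points ± r b_i, and for any two distinct such extreme points p ≠ q with q ≠ -p one has ‖p - q‖ = 2r, while ‖p - (-p)‖ = 2r as well; in particular every extreme point of S_r is at distance 2r from every other extreme point. -/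
section Aux

variable {K : Type*} [Field K] [LinearOrder K] [IsStrictOrderedRing K]

private lemma sum_split {n : ℕ} (f : Fin n → K) {i j : Fin n} (hij : i ≠ j) :
    ∑ k, f k = f i + f j + ∑ k ∈ (Finset.univ.erase i).erase j, f k := by
  rw [← Finset.add_sum_erase _ f (Finset.mem_univ i),
      ← Finset.add_sum_erase _ f (Finset.mem_erase.2 ⟨hij.symm, Finset.mem_univ j⟩)]
  ring

private lemma sum_abs_single {n : ℕ} (i : Fin n) (c : K) :
    (∑ k, |(Pi.single i c : Fin n → K) k|) = |c| := by
  simp [Pi.single_apply, apply_ite abs, Finset.sum_ite_eq']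

private lemma smul_single_one {n : ℕ} (r : K) (i : Fin n) :
    r • (Pi.single i 1 : Fin n → K) = Pi.single i r := by
  funext k; simp [Pi.single_apply, mul_ite]

private lemma neg_single {n : ℕ} (r : K) (i : Fin n) :
    -(Pi.single i r : Fin n → K) = Pi.single i (-r) := by
  funext k; by_cases h : k = i <;> simp [Pi.single_apply, h]

private lemma eq_single {n : ℕ} {r : K} {u : Fin n → K} {i : Fin n} {a : K}
    (hsum : (∑ k, |u k|) = r) (hua : u i = a) (har : |a| = r) :
    u = Pi.single i a := by
  funext k
  rcases eq_or_ne k i with rfl | hk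
  · simp [hua]
  · have hsplit := Finset.add_sum_erase Finset.univ (fun k => |u k|) (Finset.mem_univ i)
    have h0 : ∑ k ∈ Finset.univ.erase i, |u k| = 0 := by
      rw [hua] at hsplit
      rw [hsum] at hsplit  -- but hsum is ∑ univ...
      linarith [hsplit, har]
    have hz : |u k| = 0 := by
      refine (Finset.sum_eq_zero_iff_of_nonneg (fun k _ => abs_nonneg _)).1 h0 k ?_
      exact Finset.mem_erase.2 ⟨hk, Finset.mem_univ k⟩
    simp [Pi.single_apply, hk, abs_eq_zero.1 hz]

private lemma isExt_single {n : ℕ} {r : K} (hr : 0 < r) (i : Fin n) (a : K) (har : |a| = r) :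
    (∑ k, |(Pi.single i a : Fin n → K) k|) = r ∧
    ∀ u₁ u₂ : Fin n → K, (∑ k, |u₁ k|) = r → (∑ k, |u₂ k|) = r →
      (Pi.single i a : Fin n → K) = (2⁻¹ : K) • (u₁ + u₂) →
      u₁ = Pi.single i a ∧ u₂ = Pi.single i a := by
  refine ⟨by rw [sum_abs_single, har], ?_⟩
  intro u₁ u₂ hs1 hs2 hmid
  have h := congrFun hmid i
  simp only [Pi.smul_apply, Pi.add_apply, Pi.single_eq_same, smul_eq_mul] at h
  have b1 : |u₁ i| ≤ r := hs1 ▸ Finset.single_le_sum (fun k _ => abs_nonneg (u₁ k)) (Finset.mem_univ i)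
  have b2 : |u₂ i| ≤ r := hs2 ▸ Finset.single_le_sum (fun k _ => abs_nonneg (u₂ k)) (Finset.mem_univ i)
  have l1 := le_abs_self (u₁ i)
  have l2 := le_abs_self (u₂ i)
  have l1' := neg_abs_le (u₁ i)
  have l2' := neg_abs_le (u₂ i)
  rcases (abs_eq hr.le).1 har with rfl | rfl
  · have e1 : u₁ i = a := by linarith
    have e2 : u₂ i = a := by linarith
    exact ⟨eq_single hs1 e1 har, eq_single hs2 e2 har⟩
  · have e1 : u₁ i = -r := by linarith
    have e2 : u₂ i = -r := by linarith
    exact ⟨eq_single hs1 e1 har, eq_single hs2 e2 har⟩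

private lemma abs_add_sub {x : K} (t : K) (ht : 0 < t) (htx : t ≤ |x|) :
    |x + (if 0 < x then t else -t)| = |x| + t ∧ |x - (if 0 < x then t else -t)| = |x| - t := by
  rcases lt_trichotomy 0 x with hx | hx | hx
  · rw [if_pos hx]
    rw [abs_of_pos hx] at htx ⊢
    exact ⟨by rw [abs_of_pos (by linarith)], by rw [abs_of_nonneg (by linarith)]⟩
  · rw [← hx, abs_zero] at htx; linarith
  · rw [if_neg (by linarith)]
    rw [abs_of_neg hx] at htx ⊢
    constructor
    · rw [abs_of_neg (by linarith)]; ring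
    · rw [abs_of_nonpos (by linarith)]; ring

private lemma exists_single {n : ℕ} {r : K} (hr : 0 < r) {p : Fin n → K}
    (hsum : (∑ k, |p k|) = r)
    (hext : ∀ u₁ u₂ : Fin n → K, (∑ k, |u₁ k|) = r → (∑ k, |u₂ k|) = r →
      p = (2⁻¹ : K) • (u₁ + u₂) → u₁ = p ∧ u₂ = p) :
    ∃ i, p = Pi.single i (p i) ∧ |p i| = r := by
  obtain ⟨i, hi⟩ : ∃ i, p i ≠ 0 := by
    by_contra h
    push_neg at h
    rw [Finset.sum_eq_zero (fun k _ => by rw [h k, abs_zero])] at hsum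
    linarith
  have hzero : ∀ j, j ≠ i → p j = 0 := by
    intro j hjne
    by_contra hpj
    have hij : i ≠ j := hjne.symm
    set t : K := min |p i| |p j| with ht_def
    have ht : 0 < t := lt_min (abs_pos.2 hi) (abs_pos.2 hpj)
    have hti : t ≤ |p i| := min_le_left _ _
    have htj : t ≤ |p j| := min_le_right _ _
    set si : K := if 0 < p i then t else -t with hsi_def
    set sj : K := if 0 < p j then t else -t with hsj_def
    obtain ⟨hi1, hi2⟩ := abs_add_sub t ht hti
    obtain ⟨hj1, hj2⟩ := abs_add_sub t ht htj
    set u₁ : Fin n → K := fun k => p k + (Pi.single i si : Fin n → K) k - (Pi.single j sj : Fin n → K) k with hu1_def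
    set u₂ : Fin n → K := fun k => p k - (Pi.single i si : Fin n → K) k + (Pi.single j sj : Fin n → K) k with hu2_def
    have hu1i : u₁ i = p i + si := by simp [hu1_def, Pi.single_eq_same, Pi.single_eq_of_ne hij]
    have hu1j : u₁ j = p j - sj := by simp [hu1_def, Pi.single_eq_same, Pi.single_eq_of_ne hjne]
    have hu2i : u₂ i = p i - si := by simp [hu2_def, Pi.single_eq_same, Pi.single_eq_of_ne hij]
    have hu2j : u₂ j = p j + sj := by simp [hu2_def, Pi.single_eq_same, Pi.single_eq_of_ne hjne]
    have hrest : ∀ k ∈ (Finset.univ.erase i).erase j, u₁ k = p k ∧ u₂ k = p k := by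
      intro k hk
      have hkj : k ≠ j := (Finset.mem_erase.1 hk).1
      have hki : k ≠ i := (Finset.mem_erase.1 (Finset.mem_erase.1 hk).2).1
      constructor <;>
        simp [hu1_def, hu2_def, Pi.single_eq_of_ne hki, Pi.single_eq_of_ne hkj]
    have hpsum := sum_split (fun k => |p k|) hij
    have hs1 : (∑ k, |u₁ k|) = r := by
      rw [sum_split (fun k => |u₁ k|) hij, hu1i, hu1j, hi1, hj2,
        Finset.sum_congr rfl (fun k hk => by rw [(hrest k hk).1])]
      rw [hsum] at hpsum
      linarith
    have hs2 : (∑ k, |u₂ k|) = r := by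
      rw [sum_split (fun k => |u₂ k|) hij, hu2i, hu2j, hi2, hj1,
        Finset.sum_congr rfl (fun k hk => by rw [(hrest k hk).2])]
      rw [hsum] at hpsum
      linarith
    have hmid : p = (2⁻¹ : K) • (u₁ + u₂) := by
      funext k
      simp only [Pi.smul_apply, Pi.add_apply, hu1_def, hu2_def, smul_eq_mul]
      ring
    have heq := (hext u₁ u₂ hs1 hs2 hmid).1
    have : p i + si = p i := by rw [← hu1i, heq]
    have hsi0 : si = 0 := by linarith
    have : si ≠ 0 := by
      rw [hsi_def]; split <;> [exact ne_of_gt ht; exact ne_of_lt (by linarith)]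
    exact this hsi0
  refine ⟨i, ?_, ?_⟩
  · funext k
    rcases eq_or_ne k i with rfl | hk
    · simp
    · rw [Pi.single_eq_of_ne hk, hzero k hk]
  · have hsplit := Finset.add_sum_erase Finset.univ (fun k => |p k|) (Finset.mem_univ i)
    rw [Finset.sum_eq_zero (fun k hk => by
      rw [hzero k (Finset.mem_erase.1 hk).1, abs_zero])] at hsplit
    simpa [hsum] using hsplit

private lemma dist_single {n : ℕ} {r : K} (hr : 0 < r) {i j : Fin n} {a b : K}
    (ha : |a| = r) (hb : |b| = r)
    (hne : (Pi.single i a : Fin n → K) ≠ Pi.single j b) :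
    (∑ k, |((Pi.single i a : Fin n → K) - (Pi.single j b : Fin n → K)) k|) = 2 * r := by
  rcases eq_or_ne i j with rfl | hij
  · have hab : a ≠ b := by rintro rfl; exact hne rfl
    have hsub : (Pi.single i a : Fin n → K) - (Pi.single i b : Fin n → K) = Pi.single i (a - b) := by
      funext k
      rcases eq_or_ne k i with rfl | hk
      · simp
      · simp [Pi.single_eq_of_ne hk]
    rw [hsub, sum_abs_single]
    rcases (abs_eq hr.le).1 ha with rfl | rfl <;> rcases (abs_eq hr.le).1 hb with h | h
    · exact absurd h.symm hab
    · rw [h]; rw [abs_of_pos (by linarith)]; ring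
    · rw [h]; rw [abs_of_neg (by linarith)]; ring
    · exact absurd h.symm hab
  · rw [sum_split (fun k => |((Pi.single i a : Fin n → K) - (Pi.single j b : Fin n → K)) k|) hij]
    have hvi : ((Pi.single i a : Fin n → K) - (Pi.single j b : Fin n → K)) i = a := by
      simp [Pi.single_eq_of_ne hij]
    have hvj : ((Pi.single i a : Fin n → K) - (Pi.single j b : Fin n → K)) j = -b := by
      simp [Pi.single_eq_of_ne hij.symm]
    rw [hvi, hvj, abs_neg, ha, hb,
      Finset.sum_eq_zero (fun k hk => by
        have h1 := Finset.mem_erase.1 hk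
        have h2 := Finset.mem_erase.1 h1.2
        simp [Pi.single_eq_of_ne h2.1, Pi.single_eq_of_ne h1.1])]
    ring

end Aux

theorem stmt17 {K : Type*} [Field K] [LinearOrder K] [IsStrictOrderedRing K] (n : ℕ) (r : K) (hr : 0 < r) :
    (∀ p : Fin n → K,
      ((∑ i, |p i|) = r ∧
        ∀ u₁ u₂ : Fin n → K, (∑ i, |u₁ i|) = r → (∑ i, |u₂ i|) = r →
          p = (2⁻¹ : K) • (u₁ + u₂) → u₁ = p ∧ u₂ = p) ↔
      (∃ i : Fin n, p = r • (Pi.single i (1 : K) : Fin n → K) ∨ p = -(r • (Pi.single i (1 : K) : Fin n → K)))) ∧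
    (∀ p q : Fin n → K,
      ((∑ i, |p i|) = r ∧
        ∀ u₁ u₂ : Fin n → K, (∑ i, |u₁ i|) = r → (∑ i, |u₂ i|) = r →
          p = (2⁻¹ : K) • (u₁ + u₂) → u₁ = p ∧ u₂ = p) →
      ((∑ i, |q i|) = r ∧
        ∀ u₁ u₂ : Fin n → K, (∑ i, |u₁ i|) = r → (∑ i, |u₂ i|) = r →
          q = (2⁻¹ : K) • (u₁ + u₂) → u₁ = q ∧ u₂ = q) →
      p ≠ q → (∑ i, |(p - q) i|) = 2 * r) := by
  constructor
  · intro p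
    constructor
    · rintro ⟨hsum, hext⟩
      obtain ⟨i, hp, hpi⟩ := exists_single hr hsum hext
      refine ⟨i, ?_⟩
      rcases (abs_eq hr.le).1 hpi with h | h
      · left; rw [smul_single_one, hp, h]
      · right; rw [smul_single_one, neg_single, hp, h]
    · rintro ⟨i, h | h⟩
      · rw [h, smul_single_one]
        exact isExt_single hr i r (abs_of_pos hr)
      · rw [h, smul_single_one, neg_single]
        exact isExt_single hr i (-r) (by rw [abs_neg, abs_of_pos hr])
  · intro p q hp hq hpq
    obtain ⟨i, hpi, hai⟩ := exists_single hr hp.1 hp.2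
    obtain ⟨j, hqj, hbj⟩ := exists_single hr hq.1 hq.2
    have hne : (Pi.single i (p i) : Fin n → K) ≠ Pi.single j (q j) := by
      rw [← hpi, ← hqj]; exact hpq
    have := dist_single hr hai hbj hne
    rw [hpi, hqj]
    exact this
end
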